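/- For every integer d ≥ 1 there exists a constant S(d) > 0 such that for every integer ℓ ≥ 1 and every function f : ℤ^d → ℝ: max_{x ∈ B_ℓ} |f(x)| ≤ S(d) · ℓ^{−d/2} · Σ_{α ∈ ℕ₀^d, |α| ≤ M'} ( Σ_{x ∈ B_ℓ} ℓ^{2|α|} |∇^α f(x)|² )^{1/2}, where B_ℓ := {0,1,…,ℓ}^d, M' := ⌊d/2⌋ + 1, and |α| = α_1 + ⋯ + α_d. -/

import Mathlib

open scoped BigOperators

/-- Forward difference in direction `e_i` on `ℤ^d`. -/
def fd1 {d : ℕ} (i : Fin d) (f : (Fin d → ℤ) → ℝ) : (Fin d → ℤ) → ℝ :=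
  fun x => f (x + Pi.single i 1) - f x

/-- Iterated forward difference in one direction. -/
def fdPow {d : ℕ} (i : Fin d) : ℕ → ((Fin d → ℤ) → ℝ) → (Fin d → ℤ) → ℝ
  | 0, f => f
  | k + 1, f => fd1 i (fdPow i k f)

/-- Multiindex forward difference `∇^α = ∇₁^{α₁} ⋯ ∇_d^{α_d}`. -/
def fdMulti {d : ℕ} (α : Fin d → ℕ) (f : (Fin d → ℤ) → ℝ) : (Fin d → ℤ) → ℝ :=
  (List.finRange d).foldr (fun i g => fdPow i (α i) g) f

/-- generalized binomial coefficient C(t,k), real valued -/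
noncomputable def vc : ℤ → ℕ → ℝ
  | _, 0 => 1
  | t, (k+1) => vc t k * ((t : ℝ) - k) / (k+1)

lemma vc_zero (t : ℤ) : vc t 0 = 1 := rfl

lemma vc_succ (t : ℤ) (k : ℕ) : vc t (k+1) = vc t k * ((t : ℝ) - k) / (k+1) := rfl

lemma vc_pascal (t : ℤ) (k : ℕ) : vc t (k+1) = vc (t-1) (k+1) + vc (t-1) k := by
  induction k generalizing t with
  | zero =>
    simp only [vc_succ, vc_zero]
    push_cast
    ring
  | succ k ih =>
    have h1 := vc_succ t (k+1)
    rw [show k+1+1 = k+2 from rfl] at h1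
    rw [h1, ih t, vc_succ (t-1) (k+1), vc_succ (t-1) k]
    have hk2 : ((k:ℝ)+2) ≠ 0 := by positivity
    have hk1 : ((k:ℝ)+1) ≠ 0 := by positivity
    push_cast
    field_simp
    ring

lemma vc_zero_left (k : ℕ) : vc 0 (k+1) = 0 := by
  induction k with
  | zero => simp [vc_succ, vc_zero]
  | succ k ih => rw [vc_succ, ih]; ring

lemma vc_abs_le (t : ℤ) (k : ℕ) : |vc t k| ≤ ((t.natAbs : ℝ) + k)^k := by
  induction k with
  | zero => simp [vc_zero]
  | succ k ih =>
    rw [vc_succ, abs_div, abs_mul]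
    have h1 : |(t:ℝ) - k| ≤ (t.natAbs : ℝ) + (k+1) := by
      have habs : |(t:ℝ)| = (t.natAbs : ℝ) := by
        simp [Nat.cast_natAbs]
      calc |(t:ℝ) - k| ≤ |(t:ℝ)| + |(k:ℝ)| := abs_sub _ _
        _ ≤ (t.natAbs : ℝ) + (k+1) := by
            rw [habs, abs_of_nonneg (Nat.cast_nonneg k)]
            linarith
    have h2 : |((k:ℝ)+1)| = (k:ℝ)+1 := abs_of_pos (by positivity)
    have h3 : (1:ℝ) ≤ (k:ℝ)+1 := by linarith [Nat.cast_nonneg (α := ℝ) k]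
    calc |vc t k| * |(t:ℝ) - k| / |((k:ℝ)+1)|
        ≤ ((t.natAbs:ℝ)+k)^k * ((t.natAbs:ℝ)+(k+1)) / 1 := by
          rw [h2]
          apply div_le_div₀ (by positivity) _ one_pos h3
          exact mul_le_mul ih h1 (abs_nonneg _) (by positivity)
      _ ≤ ((t.natAbs:ℝ)+((k:ℝ)+1))^(k+1) := by
          rw [div_one, pow_succ]
          have : ((t.natAbs:ℝ)+k)^k ≤ ((t.natAbs:ℝ)+(k+1))^k := by
            gcongr; linarith
          have h0 : (0:ℝ) ≤ (t.natAbs:ℝ)+(k+1) := by positivity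
          push_cast
          nlinarith [pow_nonneg (show (0:ℝ) ≤ (t.natAbs:ℝ)+k by positivity) k]
      _ = ((t.natAbs:ℝ) + ((k+1:ℕ):ℝ))^(k+1) := by push_cast; ring
section FD
variable {d : ℕ}

lemma fd1_comm (i j : Fin d) (f : (Fin d → ℤ) → ℝ) :
    fd1 i (fd1 j f) = fd1 j (fd1 i f) := by
  funext x
  simp only [fd1]
  have h : x + Pi.single j 1 + Pi.single i 1 = x + Pi.single i 1 + Pi.single j 1 :=
    add_right_comm x _ _
  rw [h]; ring

lemma fd1_fdPow (i j : Fin d) (k : ℕ) (f : (Fin d → ℤ) → ℝ) :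
    fd1 j (fdPow i k f) = fdPow i k (fd1 j f) := by
  induction k with
  | zero => rfl
  | succ k ih => simp only [fdPow]; rw [← ih, fd1_comm]

lemma fdPow_comm (i j : Fin d) (a b : ℕ) (f : (Fin d → ℤ) → ℝ) :
    fdPow i a (fdPow j b f) = fdPow j b (fdPow i a f) := by
  induction a with
  | zero => rfl
  | succ a ih => simp only [fdPow]; rw [ih, fd1_fdPow]

lemma fdPow_shift (i : Fin d) (k : ℕ) (f : (Fin d → ℤ) → ℝ) (y : Fin d → ℤ) :
    fdPow i k f (y + Pi.single i 1) = fdPow i k f y + fdPow i (k+1) f y := by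
  have : fdPow i (k+1) f y = fdPow i k f (y + Pi.single i 1) - fdPow i k f y := rfl
  linarith [this]

private def fdL (L : List (Fin d)) (γ : Fin d → ℕ) (f : (Fin d → ℤ) → ℝ) :
    (Fin d → ℤ) → ℝ :=
  L.foldr (fun i g => fdPow i (γ i) g) f

lemma fdL_congr {L : List (Fin d)} {γ δ : Fin d → ℕ} (h : ∀ j ∈ L, γ j = δ j)
    (f : (Fin d → ℤ) → ℝ) : fdL L γ f = fdL L δ f := by
  induction L with
  | nil => rfl
  | cons a T ih =>
    simp only [fdL, List.foldr_cons]
    rw [h a (List.mem_cons_self)]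
    exact congrArg (fdPow a (δ a)) (ih (fun j hj => h j (List.mem_cons_of_mem a hj)))

lemma fdPow_fdL (i : Fin d) (k : ℕ) (L : List (Fin d)) (γ : Fin d → ℕ)
    (f : (Fin d → ℤ) → ℝ) : fdPow i k (fdL L γ f) = fdL L γ (fdPow i k f) := by
  induction L with
  | nil => rfl
  | cons a T ih => simp only [fdL, List.foldr_cons] at *; rw [fdPow_comm, ih]

lemma fdL_update {L : List (Fin d)} {i : Fin d} (hi : i ∈ L) (hnd : L.Nodup)
    {γ : Fin d → ℕ} (hγ : γ i = 0) (k : ℕ) (f : (Fin d → ℤ) → ℝ) :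
    fdL L (Function.update γ i k) f = fdPow i k (fdL L γ f) := by
  induction L with
  | nil => simp at hi
  | cons a T ih =>
    rcases List.nodup_cons.mp hnd with ⟨hanT, hT⟩
    by_cases hia : a = i
    · subst hia
      have hiT : a ∉ T := hanT
      simp only [fdL, List.foldr_cons]
      rw [Function.update_self]
      have h1 : fdL T (Function.update γ a k) f = fdL T γ f :=
        fdL_congr (fun j hj => by
          rw [Function.update_of_ne (fun hji => by subst hji; exact hiT hj)]) f
      rw [show (T.foldr (fun i g => fdPow i ((Function.update γ a k) i) g) f) =
          fdL T (Function.update γ a k) f from rfl, h1, hγ]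
      rfl
    · have hiT : i ∈ T := by
        rcases List.mem_cons.mp hi with h | h
        · exact absurd h.symm hia
        · exact h
      simp only [fdL, List.foldr_cons]
      rw [Function.update_of_ne (Ne.symm (fun h => hia h.symm))]
      have := ih hiT hT
      simp only [fdL] at this
      rw [this, ← fdPow_comm]

lemma fdMulti_update {i : Fin d} {γ : Fin d → ℕ} (hγ : γ i = 0) (k : ℕ)
    (f : (Fin d → ℤ) → ℝ) :
    fdMulti (Function.update γ i k) f = fdPow i k (fdMulti γ f) :=
  fdL_update (List.mem_finRange i) (List.nodup_finRange d) hγ k f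

end FD
section Taylor
variable {d : ℕ}

/-- index simplex: multiindices of total order ≤ m -/
def simplex (d m : ℕ) : Finset (Fin d → ℕ) :=
  (Finset.Iic (fun _ => m)).filter (fun γ => ∑ i, γ i ≤ m)

lemma mem_simplex {m : ℕ} {γ : Fin d → ℕ} : γ ∈ simplex d m ↔ ∑ i, γ i ≤ m := by
  constructor
  · intro h; exact (Finset.mem_filter.mp h).2
  · intro h
    refine Finset.mem_filter.mpr ⟨Finset.mem_Iic.mpr ?_, h⟩
    intro i
    exact le_trans (Finset.single_le_sum (fun _ _ => Nat.zero_le _) (Finset.mem_univ i)) h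

/-- discrete Taylor polynomial of order m, base point y, evaluated at x -/
noncomputable def Tay (m : ℕ) (f : (Fin d → ℤ) → ℝ) (x y : Fin d → ℤ) : ℝ :=
  ∑ γ ∈ simplex d m, (∏ i, vc (x i - y i) (γ i)) * fdMulti γ f y

lemma Tay_self (m : ℕ) (f : (Fin d → ℤ) → ℝ) (x : Fin d → ℤ) : Tay m f x x = f x := by
  classical
  unfold Tay
  have h0 : (0 : Fin d → ℕ) ∈ simplex d m := mem_simplex.mpr (by simp)
  rw [Finset.sum_eq_single (0 : Fin d → ℕ)]
  · simp [vc_zero, fdMulti, fdL]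
    induction (List.finRange d) with
    | nil => rfl
    | cons a T ih => simp [List.foldr_cons, Pi.zero_apply, fdPow, ih]
  · intro γ _ hγ
    have : ∃ i, γ i ≠ 0 := by
      by_contra hc
      push_neg at hc
      exact hγ (funext (fun i => hc i))
    obtain ⟨i, hi⟩ := this
    have : vc (x i - x i) (γ i) = 0 := by
      obtain ⟨k, hk⟩ := Nat.exists_eq_succ_of_ne_zero hi
      rw [hk]
      simpa using vc_zero_left k
    apply mul_eq_zero_of_left
    exact Finset.prod_eq_zero (Finset.mem_univ i) this
  · intro h; exact absurd h0 h

lemma prod_vc_update (t : Fin d → ℤ) (γ : Fin d → ℕ) (k : Fin d) (hγ : γ k = 0) (j : ℕ) :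
    (∏ i, vc (t i) (Function.update γ k j i))
      = vc (t k) j * ∏ i, vc (t i) (γ i) := by
  classical
  have h1 : (∏ i, vc (t i) (Function.update γ k j i))
      = ∏ i, Function.update (fun i => vc (t i) (γ i)) k (vc (t k) j) i := by
    apply Finset.prod_congr rfl
    intro i _
    by_cases hik : i = k
    · subst hik; rw [Function.update_self, Function.update_self]
    · rw [Function.update_of_ne hik, Function.update_of_ne hik]
  rw [h1, Finset.prod_update_of_mem (Finset.mem_univ k)]
  congr 1
  rw [Finset.prod_eq_prod_diff_singleton_mul (Finset.mem_univ k) (fun i => vc (t i) (γ i)),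
    hγ, vc_zero, mul_one]

lemma prod_vc_offk (t s : Fin d → ℤ) (γ : Fin d → ℕ) (k : Fin d) (hγ : γ k = 0)
    (h : ∀ i, i ≠ k → t i = s i) :
    (∏ i, vc (t i) (γ i)) = ∏ i, vc (s i) (γ i) := by
  apply Finset.prod_congr rfl
  intro i _
  by_cases hik : i = k
  · subst hik; rw [hγ, vc_zero, vc_zero]
  · rw [h i hik]

lemma sum_update_zero (γ : Fin d → ℕ) (k : Fin d) (hγ : γ k = 0) (j : ℕ) :
    ∑ i, Function.update γ k j i = j + ∑ i, γ i := by
  classical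
  rw [Finset.sum_update_of_mem (Finset.mem_univ k)]
  congr 1
  rw [Finset.sum_eq_sum_sdiff_singleton_add (Finset.mem_univ k) γ, hγ, add_zero]

/-- reindexing the simplex sum along coordinate k -/
lemma simplex_reindex (m : ℕ) (k : Fin d) (F : (Fin d → ℕ) → ℝ) :
    ∑ γ ∈ simplex d m, F γ
      = ∑ γ ∈ (simplex d m).filter (fun γ => γ k = 0),
          ∑ j ∈ Finset.range (m + 1 - ∑ i, γ i), F (Function.update γ k j) := by
  classical
  rw [Finset.sum_sigma']
  apply Finset.sum_nbij' (i := fun γ => (⟨Function.update γ k 0, γ k⟩ :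
      Σ _ : Fin d → ℕ, ℕ)) (j := fun p => Function.update p.1 k p.2)
  · intro γ hγ
    have hγm := mem_simplex.mp hγ
    have hsplit : ∑ i, γ i = (∑ i ∈ Finset.univ \ {k}, γ i) + γ k :=
      Finset.sum_eq_sum_sdiff_singleton_add (Finset.mem_univ k) γ
    have hupd : ∑ i, Function.update γ k 0 i = ∑ i ∈ Finset.univ \ {k}, γ i := by
      rw [Finset.sum_update_of_mem (Finset.mem_univ k), zero_add]
    rw [Finset.mem_sigma]
    constructor
    · rw [Finset.mem_filter]
      refine ⟨mem_simplex.mpr ?_, Function.update_self _ _ _⟩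
      rw [hupd]; omega
    · simp only [Finset.mem_range, hupd]
      omega
  · intro p hp
    rw [Finset.mem_sigma] at hp
    obtain ⟨hp1, hp2⟩ := hp
    rw [Finset.mem_filter] at hp1
    have h1 := mem_simplex.mp hp1.1
    rw [Finset.mem_range] at hp2
    apply mem_simplex.mpr
    rw [sum_update_zero p.1 k hp1.2 p.2]
    omega
  · intro γ _
    funext i
    by_cases hik : i = k
    · subst hik; simp
    · simp [Function.update_of_ne hik]
  · intro p hp
    rw [Finset.mem_sigma] at hp
    obtain ⟨hp1, _⟩ := hp
    rw [Finset.mem_filter] at hp1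
    have hk0 : p.1 k = 0 := hp1.2
    refine Sigma.ext ?_ ?_
    · simp only []
      funext i
      by_cases hik : i = k
      · subst hik; simp [hk0]
      · simp [Function.update_of_ne hik]
    · simp
  · intro γ _
    congr 1
    funext i
    by_cases hik : i = k
    · subst hik; simp
    · simp [Function.update_of_ne hik]
end Taylor
section Star
variable {d : ℕ}

/-- 1D Newton shift identity -/
lemma oneD (i : Fin d) (g : (Fin d → ℤ) → ℝ) (y : Fin d → ℤ) (t : ℤ) (m : ℕ) :
    (∑ k ∈ Finset.range (m+1), vc (t-1) k * fdPow i k g (y + Pi.single i 1))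
      - (∑ k ∈ Finset.range (m+1), vc t k * fdPow i k g y)
      = vc (t-1) m * fdPow i (m+1) g y := by
  induction m with
  | zero =>
    rw [show (0+1) = 1 from rfl, Finset.sum_range_one, Finset.sum_range_one]
    simp only [vc_zero, one_mul]
    have : fdPow i 1 g y = fdPow i 0 g (y + Pi.single i 1) - fdPow i 0 g y := rfl
    rw [this]
  | succ m ih =>
    rw [Finset.sum_range_succ, Finset.sum_range_succ (fun k => vc t k * fdPow i k g y)]
    have hshift : fdPow i (m+1) g (y + Pi.single i 1)
        = fdPow i (m+1) g y + fdPow i (m+2) g y := fdPow_shift i (m+1) g y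
    have hp : vc t (m+1) = vc (t-1) (m+1) + vc (t-1) m := vc_pascal t m
    have := ih
    rw [hshift, hp]
    ring_nf
    ring_nf at this
    linarith [this]

/-- base-point shift identity for the Taylor polynomial -/
lemma Tay_base_shift (m : ℕ) (f : (Fin d → ℤ) → ℝ) (x y : Fin d → ℤ) (k : Fin d) :
    Tay m f x (y + Pi.single k 1) - Tay m f x y
      = ∑ γ ∈ (simplex d m).filter (fun γ => γ k = 0),
          (∏ i, vc (x i - y i) (γ i)) *
            (vc (x k - y k - 1) (m - ∑ i, γ i) *
              fdMulti (Function.update γ k (m + 1 - ∑ i, γ i)) f y) := by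
  classical
  unfold Tay
  rw [simplex_reindex m k, simplex_reindex m k
    (fun γ => (∏ i, vc (x i - y i) (γ i)) * fdMulti γ f y)]
  rw [← Finset.sum_sub_distrib]
  apply Finset.sum_congr rfl
  intro γ hγ
  rw [Finset.mem_filter] at hγ
  have hγ0 : γ k = 0 := hγ.2
  have hγm : ∑ i, γ i ≤ m := mem_simplex.mp hγ.1
  set y' := y + Pi.single k 1 with hy'
  have hy'k : y' k = y k + 1 := by simp [hy']
  have hy'i : ∀ i, i ≠ k → y' i = y i := by
    intro i hik
    simp [hy', Pi.single_apply, hik]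
  -- rewrite each inner sum
  have hL : ∀ j, (∏ i, vc (x i - y' i) (Function.update γ k j i))
      * fdMulti (Function.update γ k j) f y'
      = vc (x k - y k - 1) j * ((∏ i, vc (x i - y i) (γ i)) * fdPow k j (fdMulti γ f) y') := by
    intro j
    rw [prod_vc_update (fun i => x i - y' i) γ k hγ0 j]
    rw [prod_vc_offk (fun i => x i - y' i) (fun i => x i - y i) γ k hγ0
      (fun i hik => by show x i - y' i = x i - y i; rw [hy'i i hik])]
    rw [fdMulti_update hγ0 j f]
    have : x k - y' k = x k - y k - 1 := by rw [hy'k]; ring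
    rw [this]
    ring
  have hR : ∀ j, (∏ i, vc (x i - y i) (Function.update γ k j i))
      * fdMulti (Function.update γ k j) f y
      = vc (x k - y k) j * ((∏ i, vc (x i - y i) (γ i)) * fdPow k j (fdMulti γ f) y) := by
    intro j
    rw [prod_vc_update (fun i => x i - y i) γ k hγ0 j, fdMulti_update hγ0 j f]
    ring
  rw [Finset.sum_congr rfl (fun j _ => hL j), Finset.sum_congr rfl (fun j _ => hR j)]
  have hrange : m + 1 - ∑ i, γ i = (m - ∑ i, γ i) + 1 := by omega
  rw [hrange]
  set q := m - ∑ i, γ i with hq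
  set C := ∏ i, vc (x i - y i) (γ i) with hC
  set g := fdMulti γ f with hg
  have h1d := oneD k g y (x k - y k) q
  have e1 : ∑ j ∈ Finset.range (q+1), vc (x k - y k - 1) j * (C * fdPow k j g y')
      = C * ∑ j ∈ Finset.range (q+1), vc (x k - y k - 1) j * fdPow k j g y' := by
    rw [Finset.mul_sum]; apply Finset.sum_congr rfl; intro j _; ring
  have e2 : ∑ j ∈ Finset.range (q+1), vc (x k - y k) j * (C * fdPow k j g y)
      = C * ∑ j ∈ Finset.range (q+1), vc (x k - y k) j * fdPow k j g y := by
    rw [Finset.mul_sum]; apply Finset.sum_congr rfl; intro j _; ring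
  rw [e1, e2, ← mul_sub, h1d]
  rw [show fdMulti (Function.update γ k (q+1)) f y = fdPow k (q+1) g y from by
    rw [hg, fdMulti_update hγ0]]

end Star
section Helpers

lemma tele_sum (G W : ℤ → ℝ) (h : ∀ s, G (s+1) - G s = W s) :
    ∀ a b : ℤ, a ≤ b → G b - G a = ∑ s ∈ Finset.Ico a b, W s := by
  intro a b hab
  refine Int.le_induction (motive := fun b _ => G b - G a = ∑ s ∈ Finset.Ico a b, W s) ?_ ?_ b hab
  · simp
  · intro n hn ihn
    have hins : Finset.Ico a (n+1) = insert n (Finset.Ico a n) := by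
      ext m
      simp only [Finset.mem_Ico, Finset.mem_insert]
      omega
    rw [hins, Finset.sum_insert (by simp [Finset.mem_Ico]), ← ihn, ← h n]
    ring

lemma abs_tele (G W : ℤ → ℝ) (h : ∀ s, G (s+1) - G s = W s) (a b lo hi : ℤ)
    (hal : lo ≤ a) (hah : a ≤ hi) (hbl : lo ≤ b) (hbh : b ≤ hi) :
    |G b - G a| ≤ ∑ s ∈ Finset.Icc lo hi, |W s| := by
  have key : ∀ u v : ℤ, lo ≤ u → v ≤ hi → u ≤ v →
      |G v - G u| ≤ ∑ s ∈ Finset.Icc lo hi, |W s| := by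
    intro u v hu hv huv
    rw [tele_sum G W h u v huv]
    calc |∑ s ∈ Finset.Ico u v, W s| ≤ ∑ s ∈ Finset.Ico u v, |W s| :=
          Finset.abs_sum_le_sum_abs _ _
      _ ≤ ∑ s ∈ Finset.Icc lo hi, |W s| := by
          apply Finset.sum_le_sum_of_subset_of_nonneg
          · intro s hs
            rw [Finset.mem_Ico] at hs
            rw [Finset.mem_Icc]
            omega
          · intro s _ _; exact abs_nonneg _
  rcases le_total a b with hab | hba
  · exact key a b hal hbh hab
  · rw [abs_sub_comm]; exact key b a hbl hah hba

lemma sum_le_of_fiber_card {ι κ : Type*} [DecidableEq κ] (s : Finset ι) (t : Finset κ)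
    (φ : ι → κ) (H : κ → ℝ) (hH : ∀ z, 0 ≤ H z) (hφ : ∀ i ∈ s, φ i ∈ t) (n : ℕ)
    (hn : ∀ z, (s.filter (fun i => φ i = z)).card ≤ n) :
    ∑ i ∈ s, H (φ i) ≤ (n : ℝ) * ∑ z ∈ t, H z := by
  rw [Finset.sum_comp]
  have himg : s.image φ ⊆ t := by
    intro z hz
    rcases Finset.mem_image.mp hz with ⟨i, hi, rfl⟩
    exact hφ i hi
  calc ∑ b ∈ s.image φ, (s.filter (fun i => φ i = b)).card • H b
      ≤ ∑ b ∈ s.image φ, (n : ℝ) * H b := by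
        apply Finset.sum_le_sum
        intro b _
        rw [nsmul_eq_mul]
        exact mul_le_mul_of_nonneg_right (by exact_mod_cast hn b) (hH b)
    _ = (n : ℝ) * ∑ b ∈ s.image φ, H b := by rw [Finset.mul_sum]
    _ ≤ (n : ℝ) * ∑ z ∈ t, H z := by
        apply mul_le_mul_of_nonneg_left _ (Nat.cast_nonneg n)
        exact Finset.sum_le_sum_of_subset_of_nonneg himg (fun z _ _ => hH z)

lemma sum_abs_le_sqrt_card {ι : Type*} (s : Finset ι) (g : ι → ℝ) :
    ∑ i ∈ s, |g i| ≤ Real.sqrt s.card * Real.sqrt (∑ i ∈ s, (g i)^2) := by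
  have h := Finset.sum_mul_sq_le_sq_mul_sq s (fun _ => (1:ℝ)) (fun i => |g i|)
  simp only [one_pow, one_mul, sq_abs] at h
  have h2 : (∑ i ∈ s, |g i|) ^ 2 ≤ (s.card : ℝ) * ∑ i ∈ s, (g i)^2 := by
    simpa [Finset.sum_const, nsmul_eq_mul] using h
  have h3 : ∑ i ∈ s, |g i| = Real.sqrt ((∑ i ∈ s, |g i|)^2) :=
    (Real.sqrt_sq (Finset.sum_nonneg (fun i _ => abs_nonneg _))).symm
  rw [h3]
  calc Real.sqrt ((∑ i ∈ s, |g i|)^2)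
      ≤ Real.sqrt ((s.card : ℝ) * ∑ i ∈ s, (g i)^2) := Real.sqrt_le_sqrt h2
    _ = Real.sqrt s.card * Real.sqrt (∑ i ∈ s, (g i)^2) :=
        Real.sqrt_mul (Nat.cast_nonneg _) _

lemma pow_sqrt_ratio {M d : ℕ} (hMd : d ≤ 2*M) {s t : ℝ} (hs : 0 ≤ s) (hst : s ≤ t) :
    s^M * Real.sqrt (t^d) ≤ t^M * Real.sqrt (s^d) := by
  have ht : 0 ≤ t := le_trans hs hst
  have hsq : (s^M * Real.sqrt (t^d))^2 ≤ (t^M * Real.sqrt (s^d))^2 := by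
    rw [mul_pow, mul_pow, Real.sq_sqrt (by positivity), Real.sq_sqrt (by positivity)]
    have hMd2 : M*2 = d + (2*M-d) := by omega
    have e1 : (s^M)^2 * t^d = s^d * (s^(2*M-d) * t^d) := by
      rw [← pow_mul, hMd2, pow_add]; ring
    have e2 : (t^M)^2 * s^d = s^d * (t^(2*M-d) * t^d) := by
      rw [← pow_mul, hMd2, pow_add]; ring
    rw [e1, e2]
    apply mul_le_mul_of_nonneg_left _ (by positivity)
    apply mul_le_mul_of_nonneg_right _ (by positivity)
    exact pow_le_pow_left₀ hs hst _
  have h1 : 0 ≤ t^M * Real.sqrt (s^d) := by positivity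
  nlinarith [sq_nonneg (s^M * Real.sqrt (t^d) - t^M * Real.sqrt (s^d)),
    sq_nonneg (s^M * Real.sqrt (t^d) + t^M * Real.sqrt (s^d))]

end Helpers
section Geometry
variable {d : ℕ}

noncomputable def bbox (d ℓ : ℕ) : Finset (Fin d → ℤ) := Finset.Icc 0 (fun _ => (ℓ:ℤ))

noncomputable def Nn (d ℓ : ℕ) (f : (Fin d → ℤ) → ℝ) (γ : Fin d → ℕ) : ℝ :=
  Real.sqrt (∑ z ∈ bbox d ℓ, (fdMulti γ f z)^2)

def corner (x : Fin d → ℤ) (ℓ r : ℕ) : Fin d → ℤ := fun i => min (x i) ((ℓ:ℤ) - r)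

noncomputable def qbox (x : Fin d → ℤ) (ℓ r : ℕ) : Finset (Fin d → ℤ) :=
  Finset.Icc (corner x ℓ r) (fun i => corner x ℓ r i + r)

lemma mem_bbox {ℓ : ℕ} {x : Fin d → ℤ} :
    x ∈ bbox d ℓ ↔ ∀ i, 0 ≤ x i ∧ x i ≤ ℓ := by
  simp only [bbox, Finset.mem_Icc, Pi.le_def, Pi.zero_apply]
  constructor
  · rintro ⟨h1, h2⟩ i; exact ⟨h1 i, h2 i⟩
  · intro h; exact ⟨fun i => (h i).1, fun i => (h i).2⟩

lemma mem_qbox {x : Fin d → ℤ} {ℓ r : ℕ} {y : Fin d → ℤ} :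
    y ∈ qbox x ℓ r ↔ ∀ i, corner x ℓ r i ≤ y i ∧ y i ≤ corner x ℓ r i + r := by
  simp only [qbox, Finset.mem_Icc, Pi.le_def]
  constructor
  · rintro ⟨h1, h2⟩ i; exact ⟨h1 i, h2 i⟩
  · intro h; exact ⟨fun i => (h i).1, fun i => (h i).2⟩

lemma x_mem_qbox {x : Fin d → ℤ} {ℓ r : ℕ} (hx : x ∈ bbox d ℓ) (hr : r ≤ ℓ) :
    x ∈ qbox x ℓ r := by
  rw [mem_qbox]
  intro i
  have h := mem_bbox.mp hx i
  constructor
  · exact min_le_left _ _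
  · simp only [corner]
    omega

lemma qbox_subset_bbox {x : Fin d → ℤ} {ℓ r : ℕ} (hx : x ∈ bbox d ℓ) (hr : r ≤ ℓ) :
    qbox x ℓ r ⊆ bbox d ℓ := by
  intro y hy
  rw [mem_qbox] at hy
  rw [mem_bbox]
  intro i
  have h := mem_bbox.mp hx i
  have h2 := hy i
  simp only [corner] at h2
  omega

lemma qbox_mono {x : Fin d → ℤ} {ℓ r r' : ℕ} (h : r ≤ r') :
    qbox x ℓ r ⊆ qbox x ℓ r' := by
  intro y hy
  rw [mem_qbox] at hy ⊢
  intro i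
  have h2 := hy i
  simp only [corner] at h2 ⊢
  omega

lemma qbox_card (x : Fin d → ℤ) (ℓ r : ℕ) : (qbox x ℓ r).card = (r+1)^d := by
  rw [qbox, Pi.card_Icc]
  have : ∀ i : Fin d, (Finset.Icc (corner x ℓ r i) (corner x ℓ r i + r)).card = r + 1 := by
    intro i
    rw [Int.card_Icc]
    omega
  rw [Finset.prod_congr rfl (fun i _ => this i), Finset.prod_const, Finset.card_univ,
    Fintype.card_fin]

lemma qbox_zero {x : Fin d → ℤ} {ℓ : ℕ} (hx : x ∈ bbox d ℓ) : qbox x ℓ 0 = {x} := by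
  have hc : corner x ℓ 0 = x := by
    funext i
    simp only [corner]
    have := mem_bbox.mp hx i
    omega
  simp only [qbox, hc]
  ext y
  simp only [Finset.mem_Icc, Finset.mem_singleton, Pi.le_def]
  constructor
  · rintro ⟨h1, h2⟩
    funext i
    have := h1 i
    have := h2 i
    simp only [Nat.cast_zero] at *
    omega
  · rintro rfl
    constructor <;> intro i <;> simp

/-- average of the Taylor polynomial over `qbox x ℓ r` -/
noncomputable def Pav (M : ℕ) (f : (Fin d → ℤ) → ℝ) (x : Fin d → ℤ) (ℓ r : ℕ) : ℝ :=
  (((r+1)^d : ℕ) : ℝ)⁻¹ * ∑ y ∈ qbox x ℓ r, Tay (M-1) f x y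

lemma Pav_zero {M ℓ : ℕ} (f : (Fin d → ℤ) → ℝ) {x : Fin d → ℤ} (hx : x ∈ bbox d ℓ) :
    Pav M f x ℓ 0 = f x := by
  rw [Pav, qbox_zero hx]
  simp [Tay_self]

/-- mixing point for the coordinate telescope -/
def mixf (y y' : Fin d → ℤ) (n : ℕ) : Fin d → ℤ := fun j => if (j:ℕ) < n then y j else y'  j

lemma Tay_diff_bound (M : ℕ) (f : (Fin d → ℤ) → ℝ) (x : Fin d → ℤ) (a : Fin d → ℤ)
    (r : ℕ) (y y' : Fin d → ℤ)
    (hy : ∀ i, a i ≤ y i ∧ y i ≤ a i + r) (hy' : ∀ i, a i ≤ y' i ∧ y' i ≤ a i + r) :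
    |Tay (M-1) f x y - Tay (M-1) f x y'| ≤
      ∑ n : Fin d, ∑ s ∈ Finset.Icc (a n) (a n + r),
        |Tay (M-1) f x (Function.update (mixf y y' n) n (s+1))
          - Tay (M-1) f x (Function.update (mixf y y' n) n s)| := by
  classical
  set g : ℕ → ℝ := fun t => Tay (M-1) f x (mixf y y' t) with hg
  have hmixd : mixf y y' d = y := by
    funext j
    simp [mixf, j.isLt]
  have hmix0 : mixf y y' 0 = y' := by
    funext j
    simp [mixf]
  have htel : Tay (M-1) f x y - Tay (M-1) f x y' = ∑ n ∈ Finset.range d, (g (n+1) - g n) := by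
    rw [Finset.sum_range_sub g d]
    rw [hg]
    simp only []
    rw [hmixd, hmix0]
  rw [htel]
  calc |∑ n ∈ Finset.range d, (g (n+1) - g n)|
      ≤ ∑ n ∈ Finset.range d, |g (n+1) - g n| := Finset.abs_sum_le_sum_abs _ _
    _ = ∑ n : Fin d, |g ((n:ℕ)+1) - g (n:ℕ)| := by
        rw [Finset.sum_range fun n => |g (n+1) - g n|]
    _ ≤ _ := by
        apply Finset.sum_le_sum
        intro n _
        -- telescope in coordinate n
        set G : ℤ → ℝ := fun s => Tay (M-1) f x (Function.update (mixf y y' (n:ℕ)) n s)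
          with hG
        have h1 : g ((n:ℕ)+1) = G (y n) := by
          rw [hg, hG]
          simp only []
          congr 1
          funext j
          by_cases hj : j = n
          · subst hj; simp [mixf, Function.update_self]
          · have hjn : (j:ℕ) ≠ (n:ℕ) := fun hc => hj (Fin.ext hc)
            rw [Function.update_of_ne hj]
            simp only [mixf]
            by_cases hlt : (j:ℕ) < (n:ℕ)
            · rw [if_pos hlt, if_pos (by omega)]
            · rw [if_neg hlt, if_neg (by omega)]
        have h2 : g (n:ℕ) = G (y' n) := by
          rw [hg, hG]
          simp only []
          congr 1
          funext j
          by_cases hj : j = n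
          · subst hj; simp [mixf, Function.update_self]
          · rw [Function.update_of_ne hj]
        rw [h1, h2]
        exact abs_tele G (fun s => G (s+1) - G s) (fun s => rfl) (y' n) (y n)
          (a n) (a n + r) (hy' n).1 (hy' n).2 (hy n).1 (hy n).2
end Geometry
section Fiber
variable {d : ℕ}

lemma fiber_card_le (hd : 1 ≤ d) (a a' : Fin d → ℤ) (r r' : ℕ)
    (hrr : r + 1 ≤ 2*(r'+1)) (n : Fin d) (z : Fin d → ℤ) :
    ((((Finset.Icc a (fun j => a j + r)) ×ˢ (Finset.Icc a' (fun j => a' j + r'))) ×ˢ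
        (Finset.Icc (a n) (a n + r))).filter
      (fun w => Function.update (mixf w.1.1 w.1.2 (n:ℕ)) n w.2 = z)).card
    ≤ 2^d * (r'+1)^(d+1) := by
  classical
  set F := ((((Finset.Icc a (fun j => a j + r)) ×ˢ (Finset.Icc a' (fun j => a' j + r'))) ×ˢ
        (Finset.Icc (a n) (a n + r))).filter
      (fun w => Function.update (mixf w.1.1 w.1.2 (n:ℕ)) n w.2 = z)) with hF
  set A : Finset (Fin d → ℤ) := Finset.Icc (fun j => if (j:ℕ) < (n:ℕ) then z j else a j)
    (fun j => if (j:ℕ) < (n:ℕ) then z j else a j + r) with hA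
  set B : Finset (Fin d → ℤ) := Finset.Icc (fun j => if (n:ℕ) < (j:ℕ) then z j else a' j)
    (fun j => if (n:ℕ) < (j:ℕ) then z j else a' j + r') with hB
  have hcard : ∀ w ∈ F, w.1 ∈ A ×ˢ B := by
    intro w hw
    rw [hF, Finset.mem_filter] at hw
    obtain ⟨hmem, heq⟩ := hw
    rw [Finset.mem_product] at hmem
    obtain ⟨hyy, _⟩ := hmem
    rw [Finset.mem_product] at hyy
    obtain ⟨hy, hy'⟩ := hyy
    rw [Finset.mem_Icc, Pi.le_def, Pi.le_def] at hy hy'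
    rw [Finset.mem_product]
    constructor
    · rw [hA, Finset.mem_Icc, Pi.le_def, Pi.le_def]
      constructor <;> intro j
      · by_cases hj : (j:ℕ) < (n:ℕ)
        · rw [if_pos hj]
          have hjn : j ≠ n := fun hc => by subst hc; omega
          have := congrFun heq j
          rw [Function.update_of_ne hjn] at this
          simp only [mixf, if_pos hj] at this
          omega
        · rw [if_neg hj]; exact hy.1 j
      · by_cases hj : (j:ℕ) < (n:ℕ)
        · rw [if_pos hj]
          have hjn : j ≠ n := fun hc => by subst hc; omega
          have := congrFun heq j
          rw [Function.update_of_ne hjn] at this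
          simp only [mixf, if_pos hj] at this
          omega
        · rw [if_neg hj]; exact hy.2 j
    · rw [hB, Finset.mem_Icc, Pi.le_def, Pi.le_def]
      constructor <;> intro j
      · by_cases hj : (n:ℕ) < (j:ℕ)
        · rw [if_pos hj]
          have hjn : j ≠ n := fun hc => by subst hc; omega
          have := congrFun heq j
          rw [Function.update_of_ne hjn] at this
          simp only [mixf, if_neg (by omega : ¬ (j:ℕ) < (n:ℕ))] at this
          omega
        · rw [if_neg hj]; exact hy'.1 j
      · by_cases hj : (n:ℕ) < (j:ℕ)
        · rw [if_pos hj]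
          have hjn : j ≠ n := fun hc => by subst hc; omega
          have := congrFun heq j
          rw [Function.update_of_ne hjn] at this
          simp only [mixf, if_neg (by omega : ¬ (j:ℕ) < (n:ℕ))] at this
          omega
        · rw [if_neg hj]; exact hy'.2 j
  have hinj : Set.InjOn (fun w : ((Fin d → ℤ) × (Fin d → ℤ)) × ℤ => w.1) ↑F := by
    rintro ⟨⟨y, y'⟩, s⟩ hw ⟨⟨u, u'⟩, t⟩ hw' h1
    rw [hF] at hw hw'
    simp only [Finset.coe_filter, Set.mem_setOf_eq] at hw hw'
    simp only [Prod.mk.injEq] at h1 ⊢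
    refine ⟨h1, ?_⟩
    have e1 := congrFun hw.2 n
    have e2 := congrFun hw'.2 n
    rw [Function.update_self] at e1 e2
    omega
  have h1 : F.card ≤ (A ×ˢ B).card :=
    Finset.card_le_card_of_injOn _ hcard hinj
  have hAcard : A.card = ∏ j : Fin d, if (j:ℕ) < (n:ℕ) then 1 else (r+1) := by
    rw [hA, Pi.card_Icc]
    apply Finset.prod_congr rfl
    intro j _
    by_cases hj : (j:ℕ) < (n:ℕ) <;> simp only [hj, if_true, if_false, Int.card_Icc] <;> omega
  have hBcard : B.card = ∏ j : Fin d, if (n:ℕ) < (j:ℕ) then 1 else (r'+1) := by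
    rw [hB, Pi.card_Icc]
    apply Finset.prod_congr rfl
    intro j _
    by_cases hj : (n:ℕ) < (j:ℕ) <;> simp only [hj, if_true, if_false, Int.card_Icc] <;> omega
  have h2 : (A ×ˢ B).card ≤ 2^d * (r'+1)^(d+1) := by
    rw [Finset.card_product, hAcard, hBcard, ← Finset.prod_mul_distrib]
    have h3 : ∀ j : Fin d, (if (j:ℕ) < (n:ℕ) then 1 else (r+1)) *
        (if (n:ℕ) < (j:ℕ) then 1 else (r'+1)) ≤ (if j = n then 2*(r'+1)^2 else 2*(r'+1)) := by
      intro j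
      by_cases hjn : j = n
      · subst hjn
        simp only [lt_irrefl, if_false, if_true]
        nlinarith
      · have hne : (j:ℕ) ≠ (n:ℕ) := fun hc => hjn (Fin.ext hc)
        rw [if_neg hjn]
        by_cases hj : (j:ℕ) < (n:ℕ)
        · rw [if_pos hj, if_neg (by omega), one_mul]
          omega
        · rw [if_neg hj, if_pos (by omega), mul_one]
          omega
    calc ∏ j : Fin d, ((if (j:ℕ) < (n:ℕ) then 1 else (r+1)) *
          (if (n:ℕ) < (j:ℕ) then 1 else (r'+1)))
        ≤ ∏ j : Fin d, (if j = n then 2*(r'+1)^2 else 2*(r'+1)) :=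
          Finset.prod_le_prod' (fun j _ => h3 j)
      _ = 2^d * (r'+1)^(d+1) := by
          rw [Finset.prod_eq_prod_diff_singleton_mul (Finset.mem_univ n)]
          rw [if_pos rfl]
          have hoff : ∀ j ∈ Finset.univ \ {n},
              (if j = n then 2*(r'+1)^2 else 2*(r'+1)) = 2*(r'+1) := by
            intro j hj
            rw [Finset.mem_sdiff, Finset.mem_singleton] at hj
            rw [if_neg hj.2]
          rw [Finset.prod_congr rfl hoff, Finset.prod_const]
          have hcd : (Finset.univ \ {n} : Finset (Fin d)).card = d - 1 := by
            rw [Finset.card_sdiff_of_subset (Finset.subset_univ _), Finset.card_singleton,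
              Finset.card_univ, Fintype.card_fin]
          rw [hcd]
          obtain ⟨e, rfl⟩ : ∃ e, d = e + 1 := ⟨d - 1, by omega⟩
          simp only [Nat.add_sub_cancel]
          rw [mul_pow]
          ring
  omega
end Fiber
section StarBound
variable {d : ℕ}

lemma star_bound (M : ℕ) (hM : 1 ≤ M) (f : (Fin d → ℤ) → ℝ) (x p : Fin d → ℤ)
    (n : Fin d) (r : ℕ) (hxp : ∀ j, (x j - p j).natAbs ≤ r) :
    |Tay (M-1) f x (p + Pi.single n 1) - Tay (M-1) f x p| ≤
      ((M+2:ℝ)*(r+1))^(M-1) *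
        ∑ γ ∈ (simplex d (M-1)).filter (fun γ => γ n = 0),
          |fdMulti (Function.update γ n (M-1+1 - ∑ i, γ i)) f p| := by
  rw [Tay_base_shift (M-1) f x p n]
  set m := M - 1 with hm
  calc |∑ γ ∈ (simplex d m).filter (fun γ => γ n = 0),
          (∏ i, vc (x i - p i) (γ i)) *
            (vc (x n - p n - 1) (m - ∑ i, γ i) *
              fdMulti (Function.update γ n (m + 1 - ∑ i, γ i)) f p)|
      ≤ ∑ γ ∈ (simplex d m).filter (fun γ => γ n = 0),
          |(∏ i, vc (x i - p i) (γ i)) *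
            (vc (x n - p n - 1) (m - ∑ i, γ i) *
              fdMulti (Function.update γ n (m + 1 - ∑ i, γ i)) f p)| :=
        Finset.abs_sum_le_sum_abs _ _
    _ ≤ ∑ γ ∈ (simplex d m).filter (fun γ => γ n = 0),
          ((M+2:ℝ)*(r+1))^m *
            |fdMulti (Function.update γ n (m+1 - ∑ i, γ i)) f p| := by
        apply Finset.sum_le_sum
        intro γ hγ
        rw [Finset.mem_filter] at hγ
        have hγm : ∑ i, γ i ≤ m := mem_simplex.mp hγ.1
        rw [abs_mul, abs_mul]
        rw [← mul_assoc]
        apply mul_le_mul_of_nonneg_right _ (abs_nonneg _)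
        -- coefficient bound
        have hb1 : |∏ i, vc (x i - p i) (γ i)| ≤ ((r:ℝ)+M)^(∑ i, γ i) := by
          rw [Finset.abs_prod]
          calc ∏ i, |vc (x i - p i) (γ i)|
              ≤ ∏ i, ((r:ℝ)+M)^(γ i) := by
                apply Finset.prod_le_prod (fun i _ => abs_nonneg _)
                intro i _
                calc |vc (x i - p i) (γ i)|
                    ≤ (((x i - p i).natAbs : ℝ) + γ i)^(γ i) := vc_abs_le _ _
                  _ ≤ ((r:ℝ)+M)^(γ i) := by
                      apply pow_le_pow_left₀ (by positivity)
                      have h1 := hxp i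
                      have h2 : γ i ≤ m := le_trans (Finset.single_le_sum
                        (fun _ _ => Nat.zero_le _) (Finset.mem_univ i)) hγm
                      have h3 : (γ i : ℝ) ≤ (M : ℝ) := by
                        have : γ i ≤ M := by omega
                        exact_mod_cast this
                      have h4 : (((x i - p i).natAbs : ℝ)) ≤ (r : ℝ) := by exact_mod_cast h1
                      linarith
            _ = ((r:ℝ)+M)^(∑ i, γ i) := Finset.prod_pow_eq_pow_sum _ _ _
        have hb2 : |vc (x n - p n - 1) (m - ∑ i, γ i)| ≤ ((r:ℝ)+M)^(m - ∑ i, γ i) := by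
          calc |vc (x n - p n - 1) (m - ∑ i, γ i)|
              ≤ (((x n - p n - 1).natAbs : ℝ) + ((m - ∑ i, γ i : ℕ) : ℝ))^(m - ∑ i, γ i) :=
                vc_abs_le _ _
            _ ≤ ((r:ℝ)+M)^(m - ∑ i, γ i) := by
                apply pow_le_pow_left₀ (by positivity)
                have h1 := hxp n
                have h2 : (x n - p n - 1).natAbs ≤ r + 1 := by omega
                have h3 : (m - ∑ i, γ i) + 1 ≤ M := by omega
                have h4 : (((x n - p n - 1).natAbs : ℝ)) ≤ (r : ℝ) + 1 := by exact_mod_cast h2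
                have h5 : ((m - ∑ i, γ i : ℕ) : ℝ) + 1 ≤ (M : ℝ) := by exact_mod_cast h3
                linarith
        calc |∏ i, vc (x i - p i) (γ i)| * |vc (x n - p n - 1) (m - ∑ i, γ i)|
            ≤ ((r:ℝ)+M)^(∑ i, γ i) * ((r:ℝ)+M)^(m - ∑ i, γ i) := by
              apply mul_le_mul hb1 hb2 (abs_nonneg _) (by positivity)
          _ = ((r:ℝ)+M)^m := by
              rw [← pow_add]
              congr 1
              omega
          _ ≤ ((M+2:ℝ)*(r+1))^m := by
              apply pow_le_pow_left₀ (by positivity)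
              have hMr : (1:ℝ) ≤ (M:ℝ) := by exact_mod_cast hM
              nlinarith [Nat.cast_nonneg (α := ℝ) r, Nat.cast_nonneg (α := ℝ) M]
    _ = ((M+2:ℝ)*(r+1))^m * ∑ γ ∈ (simplex d m).filter (fun γ => γ n = 0),
          |fdMulti (Function.update γ n (m+1 - ∑ i, γ i)) f p| := by
        rw [Finset.mul_sum]

end StarBound
section StepBound

set_option maxHeartbeats 2000000 in
lemma step_bound (d M ℓ : ℕ) (hd : 1 ≤ d) (hM : 1 ≤ M)
    (f : (Fin d → ℤ) → ℝ) (x : Fin d → ℤ) (hx : x ∈ bbox d ℓ)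
    (r r' : ℕ) (h1 : r' ≤ r) (h2 : r ≤ ℓ) (h3 : r + 1 ≤ 2*(r'+1)) :
    |Pav M f x ℓ r - Pav M f x ℓ r'| ≤
      ((d : ℝ) * 2^d * ((M:ℝ)+2)^M) * ((r:ℝ)+1)^M * (Real.sqrt (((r:ℝ)+1)^d))⁻¹ *
        ∑ γ ∈ (simplex d M).filter (fun γ => ∑ i, γ i = M), Nn d ℓ f γ := by
  classical
  set a := corner x ℓ r with ha
  set a' := corner x ℓ r' with ha'
  set Qr := qbox x ℓ r with hQr
  set Qr' := qbox x ℓ r' with hQr'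
  set Th : (Fin d → ℤ) → ℝ := fun y => Tay (M-1) f x y with hTh
  set TT := ∑ γ ∈ (simplex d M).filter (fun γ => ∑ i, γ i = M), Nn d ℓ f γ with hTTdef
  set CB : ℝ := (((M:ℝ)+2)*((r:ℝ)+1))^(M-1) with hCB
  set Sg : Fin d → Finset (Fin d → ℕ) :=
    fun n => (simplex d (M-1)).filter (fun γ => γ n = 0) with hSg
  set updn : Fin d → (Fin d → ℕ) → (Fin d → ℕ) :=
    fun n γ => Function.update γ n (M-1+1 - ∑ i, γ i) with hupdn
  set pt : Fin d → (Fin d → ℤ) → (Fin d → ℤ) → ℤ → (Fin d → ℤ) :=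
    fun n y y' s => Function.update (mixf y y' (n:ℕ)) n s with hpt
  have hQ'Q : Qr' ⊆ Qr := qbox_mono h1
  have hxQ : x ∈ Qr := x_mem_qbox hx h2
  set cr : ℝ := ((Qr.card : ℕ) : ℝ) with hcr
  set cr' : ℝ := ((Qr'.card : ℕ) : ℝ) with hcr'
  have hcrv : Qr.card = (r+1)^d := qbox_card x ℓ r
  have hcrv' : Qr'.card = (r'+1)^d := qbox_card x ℓ r'
  have hcr0 : (0:ℝ) < cr := by
    rw [hcr, hcrv]; positivity
  have hcr0' : (0:ℝ) < cr' := by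
    rw [hcr', hcrv']; positivity
  have hTT0 : 0 ≤ TT := Finset.sum_nonneg (fun γ _ => Real.sqrt_nonneg _)
  have hCB0 : 0 ≤ CB := by positivity
  -- membership facts
  have hmema : ∀ y ∈ Qr, ∀ j, a j ≤ y j ∧ y j ≤ a j + r := fun y hy => mem_qbox.mp hy
  have hpmem : ∀ n : Fin d, ∀ y ∈ Qr, ∀ y' ∈ Qr',
      ∀ s ∈ Finset.Icc (a n) (a n + (r:ℤ)), pt n y y' s ∈ Qr := by
    intro n y hy y' hy' s hs
    rw [Finset.mem_Icc] at hs
    have hya := hmema y hy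
    have hy'a := hmema y' (hQ'Q hy')
    rw [hQr, mem_qbox]
    intro j
    by_cases hj : j = n
    · subst hj
      rw [hpt]
      simp only [Function.update_self]
      exact hs
    · rw [hpt]
      simp only [Function.update_of_ne hj, mixf]
      by_cases hlt : (j:ℕ) < (n:ℕ)
      · rw [if_pos hlt]; exact hya j
      · rw [if_neg hlt]; exact hy'a j
  -- Step A1: difference of averages
  have hsum : ∑ y ∈ Qr, ∑ y' ∈ Qr', (Th y - Th y')
      = cr' * (∑ y ∈ Qr, Th y) - cr * (∑ y' ∈ Qr', Th y') := by
    have e1 : ∀ y, ∑ y' ∈ Qr', (Th y - Th y') = cr' * Th y - ∑ y' ∈ Qr', Th y' := by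
      intro y
      rw [Finset.sum_sub_distrib, Finset.sum_const, nsmul_eq_mul]
    rw [Finset.sum_congr rfl (fun y _ => e1 y), Finset.sum_sub_distrib, Finset.mul_sum,
      Finset.sum_const, nsmul_eq_mul]
  have hA1 : Pav M f x ℓ r - Pav M f x ℓ r'
      = (cr * cr')⁻¹ * ∑ y ∈ Qr, ∑ y' ∈ Qr', (Th y - Th y') := by
    rw [hsum, Pav, Pav]
    rw [← hQr, ← hQr']
    have hc1 : (((r+1)^d : ℕ) : ℝ) = cr := by rw [hcr, hcrv]
    have hc2 : (((r'+1)^d : ℕ) : ℝ) = cr' := by rw [hcr', hcrv']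
    rw [hc1, hc2]
    simp only [hTh]
    field_simp
  -- Step A2: abs
  have hA2 : |Pav M f x ℓ r - Pav M f x ℓ r'|
      ≤ (cr * cr')⁻¹ * ∑ y ∈ Qr, ∑ y' ∈ Qr', |Th y - Th y'| := by
    rw [hA1, abs_mul, abs_of_nonneg (by positivity : (0:ℝ) ≤ (cr * cr')⁻¹)]
    apply mul_le_mul_of_nonneg_left _ (by positivity)
    calc |∑ y ∈ Qr, ∑ y' ∈ Qr', (Th y - Th y')|
        ≤ ∑ y ∈ Qr, |∑ y' ∈ Qr', (Th y - Th y')| := Finset.abs_sum_le_sum_abs _ _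
      _ ≤ ∑ y ∈ Qr, ∑ y' ∈ Qr', |Th y - Th y'| :=
          Finset.sum_le_sum (fun y _ => Finset.abs_sum_le_sum_abs _ _)
  -- Step A3: pointwise bound
  have hA3 : ∀ y ∈ Qr, ∀ y' ∈ Qr', |Th y - Th y'| ≤
      CB * ∑ n : Fin d, ∑ s ∈ Finset.Icc (a n) (a n + (r:ℤ)),
        ∑ γ ∈ Sg n, |fdMulti (updn n γ) f (pt n y y' s)| := by
    intro y hy y' hy'
    have hya := hmema y hy
    have hy'a := hmema y' (hQ'Q hy')
    calc |Th y - Th y'|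
        ≤ ∑ n : Fin d, ∑ s ∈ Finset.Icc (a n) (a n + (r:ℤ)),
            |Tay (M-1) f x (Function.update (mixf y y' (n:ℕ)) n (s+1))
              - Tay (M-1) f x (Function.update (mixf y y' (n:ℕ)) n s)| :=
          Tay_diff_bound M f x a r y y' hya hy'a
      _ ≤ ∑ n : Fin d, ∑ s ∈ Finset.Icc (a n) (a n + (r:ℤ)),
            CB * ∑ γ ∈ Sg n, |fdMulti (updn n γ) f (pt n y y' s)| := by
          apply Finset.sum_le_sum
          intro n _
          apply Finset.sum_le_sum
          intro s hs
          have hpe : Function.update (mixf y y' (n:ℕ)) n (s+1)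
              = pt n y y' s + Pi.single n 1 := by
            funext j
            by_cases hj : j = n
            · subst hj
              simp only [hpt, Pi.add_apply, Function.update_self, Pi.single_eq_same]
            · simp only [hpt, Pi.add_apply, Function.update_of_ne hj,
                Pi.single_eq_of_ne hj, add_zero]
          rw [hpe]
          have hp : pt n y y' s ∈ Qr := hpmem n y hy y' hy' s hs
          have hpa := hmema _ hp
          have hxa := hmema x hxQ
          have hxp : ∀ j, (x j - pt n y y' s j).natAbs ≤ r := by
            intro j
            have := hpa j
            have := hxa j
            omega
          exact star_bound M hM f x (pt n y y' s) n r hxp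
      _ = CB * ∑ n : Fin d, ∑ s ∈ Finset.Icc (a n) (a n + (r:ℤ)),
            ∑ γ ∈ Sg n, |fdMulti (updn n γ) f (pt n y y' s)| := by
          rw [Finset.mul_sum]
          apply Finset.sum_congr rfl
          intro n _
          rw [Finset.mul_sum]
  -- Step A4: fiber counting + Cauchy-Schwarz for fixed n, γ
  have hA4 : ∀ n : Fin d, ∀ γ ∈ Sg n,
      ∑ y ∈ Qr, ∑ y' ∈ Qr', ∑ s ∈ Finset.Icc (a n) (a n + (r:ℤ)),
        |fdMulti (updn n γ) f (pt n y y' s)|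
      ≤ ((2^d * (r'+1)^(d+1) : ℕ) : ℝ) *
          (Real.sqrt (((r+1)^d : ℕ)) * Nn d ℓ f (updn n γ)) := by
    intro n γ _
    have eprod : ∑ y ∈ Qr, ∑ y' ∈ Qr', ∑ s ∈ Finset.Icc (a n) (a n + (r:ℤ)),
        |fdMulti (updn n γ) f (pt n y y' s)|
        = ∑ w ∈ ((Qr ×ˢ Qr') ×ˢ Finset.Icc (a n) (a n + (r:ℤ))),
            |fdMulti (updn n γ) f (pt n w.1.1 w.1.2 w.2)| := by
      rw [Finset.sum_product, Finset.sum_product]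
    rw [eprod]
    have hfib : ∀ z, ((((Qr ×ˢ Qr') ×ˢ Finset.Icc (a n) (a n + (r:ℤ)))).filter
        (fun w => pt n w.1.1 w.1.2 w.2 = z)).card ≤ 2^d * (r'+1)^(d+1) := by
      intro z
      exact fiber_card_le hd a a' r r' h3 n z
    have hstep := sum_le_of_fiber_card
      ((Qr ×ˢ Qr') ×ˢ Finset.Icc (a n) (a n + (r:ℤ))) Qr
      (fun w => pt n w.1.1 w.1.2 w.2)
      (fun z => |fdMulti (updn n γ) f z|)
      (fun z => abs_nonneg _)
      (by
        rintro ⟨⟨y, y'⟩, s⟩ hw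
        rw [Finset.mem_product] at hw
        obtain ⟨hyy, hs⟩ := hw
        rw [Finset.mem_product] at hyy
        exact hpmem n y hyy.1 y' hyy.2 s hs)
      (2^d * (r'+1)^(d+1)) hfib
    apply le_trans hstep
    apply mul_le_mul_of_nonneg_left _ (Nat.cast_nonneg _)
    calc ∑ z ∈ Qr, |fdMulti (updn n γ) f z|
        ≤ Real.sqrt Qr.card * Real.sqrt (∑ z ∈ Qr, (fdMulti (updn n γ) f z)^2) :=
          sum_abs_le_sqrt_card Qr _
      _ ≤ Real.sqrt (((r+1)^d : ℕ)) * Nn d ℓ f (updn n γ) := by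
          apply mul_le_mul
          · rw [hcrv]
          · rw [Nn]
            apply Real.sqrt_le_sqrt
            apply Finset.sum_le_sum_of_subset_of_nonneg (qbox_subset_bbox hx h2)
            intro z _ _
            positivity
          · exact Real.sqrt_nonneg _
          · exact Real.sqrt_nonneg _
  -- Step A5: sum over γ of norms
  have hA5 : ∀ n : Fin d, ∑ γ ∈ Sg n, Nn d ℓ f (updn n γ) ≤ TT := by
    intro n
    rw [hTTdef]
    have hinj2 : ∀ γ₁ ∈ Sg n, ∀ γ₂ ∈ Sg n, updn n γ₁ = updn n γ₂ → γ₁ = γ₂ := by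
      intro γ hγ δ hδ heq
      rw [hSg, Finset.mem_filter] at hγ hδ
      funext j
      by_cases hj : j = n
      · subst hj; rw [hγ.2, hδ.2]
      · have := congrFun heq j
        rw [hupdn] at this
        simp only [Function.update_of_ne hj] at this
        exact this
    rw [show ∑ γ ∈ Sg n, Nn d ℓ f (updn n γ)
        = ∑ β ∈ (Sg n).image (updn n), Nn d ℓ f β from (Finset.sum_image hinj2).symm]
    apply Finset.sum_le_sum_of_subset_of_nonneg
    · intro β hβ
      rw [Finset.mem_image] at hβ
      obtain ⟨γ, hγ, rfl⟩ := hβ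
      rw [hSg, Finset.mem_filter] at hγ
      have hγm : ∑ i, γ i ≤ M - 1 := mem_simplex.mp hγ.1
      rw [Finset.mem_filter]
      have hsum : ∑ i, updn n γ i = M := by
        rw [hupdn]
        rw [sum_update_zero γ n hγ.2 (M-1+1 - ∑ i, γ i)]
        omega
      exact ⟨mem_simplex.mpr (le_of_eq hsum), hsum⟩
    · intro β _ _
      exact Real.sqrt_nonneg _
  -- swap sums
  have hswap : ∑ y ∈ Qr, ∑ y' ∈ Qr', ∑ n : Fin d, ∑ s ∈ Finset.Icc (a n) (a n + (r:ℤ)),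
      ∑ γ ∈ Sg n, |fdMulti (updn n γ) f (pt n y y' s)|
      = ∑ n : Fin d, ∑ γ ∈ Sg n, ∑ y ∈ Qr, ∑ y' ∈ Qr',
          ∑ s ∈ Finset.Icc (a n) (a n + (r:ℤ)), |fdMulti (updn n γ) f (pt n y y' s)| := by
    rw [Finset.sum_congr rfl (fun y _ => Finset.sum_comm)]
    rw [Finset.sum_comm]
    apply Finset.sum_congr rfl
    intro n _
    rw [Finset.sum_congr rfl (fun y _ =>
      Finset.sum_congr rfl (fun y' _ => Finset.sum_comm))]
    rw [Finset.sum_congr rfl (fun y _ => Finset.sum_comm)]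
    rw [Finset.sum_comm]
  set F : ℝ := ((2^d * (r'+1)^(d+1) : ℕ) : ℝ) with hFdef
  set C : ℝ := Real.sqrt (((r+1)^d : ℕ)) with hCdef
  have hF0 : 0 ≤ F := Nat.cast_nonneg _
  have hC0 : 0 ≤ C := Real.sqrt_nonneg _
  -- bound on the big swapped sum
  have hRbound : ∑ n : Fin d, ∑ γ ∈ Sg n, ∑ y ∈ Qr, ∑ y' ∈ Qr',
      ∑ s ∈ Finset.Icc (a n) (a n + (r:ℤ)), |fdMulti (updn n γ) f (pt n y y' s)|
      ≤ F * (C * ((d:ℝ) * TT)) := by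
    have s1 : ∑ n : Fin d, ∑ γ ∈ Sg n, ∑ y ∈ Qr, ∑ y' ∈ Qr',
        ∑ s ∈ Finset.Icc (a n) (a n + (r:ℤ)), |fdMulti (updn n γ) f (pt n y y' s)|
        ≤ ∑ n : Fin d, ∑ γ ∈ Sg n, F * (C * Nn d ℓ f (updn n γ)) :=
      Finset.sum_le_sum (fun n _ => Finset.sum_le_sum (fun γ hγ => hA4 n γ hγ))
    have s2 : ∑ n : Fin d, ∑ γ ∈ Sg n, F * (C * Nn d ℓ f (updn n γ))
        = F * (C * ∑ n : Fin d, ∑ γ ∈ Sg n, Nn d ℓ f (updn n γ)) := by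
      simp only [Finset.mul_sum]
    have s3 : ∑ n : Fin d, ∑ γ ∈ Sg n, Nn d ℓ f (updn n γ) ≤ (d:ℝ) * TT := by
      calc ∑ n : Fin d, ∑ γ ∈ Sg n, Nn d ℓ f (updn n γ)
          ≤ ∑ _n : Fin d, TT := Finset.sum_le_sum (fun n _ => hA5 n)
        _ = (d:ℝ) * TT := by
            rw [Finset.sum_const, Finset.card_univ, Fintype.card_fin, nsmul_eq_mul]
    calc ∑ n : Fin d, ∑ γ ∈ Sg n, ∑ y ∈ Qr, ∑ y' ∈ Qr',
        ∑ s ∈ Finset.Icc (a n) (a n + (r:ℤ)), |fdMulti (updn n γ) f (pt n y y' s)|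
        ≤ ∑ n : Fin d, ∑ γ ∈ Sg n, F * (C * Nn d ℓ f (updn n γ)) := s1
      _ = F * (C * ∑ n : Fin d, ∑ γ ∈ Sg n, Nn d ℓ f (updn n γ)) := s2
      _ ≤ F * (C * ((d:ℝ) * TT)) := by
          apply mul_le_mul_of_nonneg_left _ hF0
          exact mul_le_mul_of_nonneg_left s3 hC0
  -- coefficient inequality
  have hcoef : CB * ((r':ℝ)+1) ≤ ((M:ℝ)+2)^M * ((r:ℝ)+1)^M := by
    have hrr' : ((r':ℝ)+1) ≤ ((r:ℝ)+1) := by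
      have : (r' : ℝ) ≤ (r : ℝ) := by exact_mod_cast h1
      linarith
    have hbase1 : (1:ℝ) ≤ (M:ℝ)+2 := by
      have := Nat.cast_nonneg (α := ℝ) M
      linarith
    have hstep1 : CB * ((r':ℝ)+1) ≤ CB * ((r:ℝ)+1) :=
      mul_le_mul_of_nonneg_left hrr' hCB0
    have hCBeq : CB * ((r:ℝ)+1) = ((M:ℝ)+2)^(M-1) * ((r:ℝ)+1)^M := by
      rw [hCB, mul_pow]
      obtain ⟨M₀, hM₀⟩ : ∃ M₀, M = M₀ + 1 := ⟨M - 1, by omega⟩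
      subst hM₀
      simp only [Nat.add_sub_cancel]
      ring
    have hstep2 : ((M:ℝ)+2)^(M-1) ≤ ((M:ℝ)+2)^M := pow_le_pow_right₀ hbase1 (by omega)
    calc CB * ((r':ℝ)+1) ≤ CB * ((r:ℝ)+1) := hstep1
      _ = ((M:ℝ)+2)^(M-1) * ((r:ℝ)+1)^M := hCBeq
      _ ≤ ((M:ℝ)+2)^M * ((r:ℝ)+1)^M :=
          mul_le_mul_of_nonneg_right hstep2 (by positivity)
  -- cast facts
  have hcrR : cr = ((r:ℝ)+1)^d := by rw [hcr, hcrv]; push_cast; ring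
  have hcr'R : cr' = ((r':ℝ)+1)^d := by rw [hcr', hcrv']; push_cast; ring
  have hFR : F = 2^d * ((r':ℝ)+1)^(d+1) := by rw [hFdef]; push_cast; ring
  have hCR : C = Real.sqrt (((r:ℝ)+1)^d) := by
    rw [hCdef]
    congr 1
    push_cast
    ring
  set t := Real.sqrt (((r:ℝ)+1)^d) with htdef
  have htpos : 0 < t := Real.sqrt_pos.mpr (by positivity)
  have ht2 : t * t = ((r:ℝ)+1)^d := Real.mul_self_sqrt (by positivity)
  have hfinal : (cr * cr')⁻¹ * (CB * (F * (C * ((d:ℝ) * TT))))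
      ≤ ((d : ℝ) * 2^d * ((M:ℝ)+2)^M) * ((r:ℝ)+1)^M * t⁻¹ * TT := by
    rw [hcrR, hcr'R, hFR, hCR]
    apply le_of_mul_le_mul_right _
      (show (0:ℝ) < (((r:ℝ)+1)^d * ((r':ℝ)+1)^d) * t from by positivity)
    have hL : ((((r:ℝ)+1)^d * ((r':ℝ)+1)^d)⁻¹ *
          (CB * ((2^d * ((r':ℝ)+1)^(d+1)) * (t * ((d:ℝ) * TT))))) *
          ((((r:ℝ)+1)^d * ((r':ℝ)+1)^d) * t)
        = CB * (2^d * (((r':ℝ)+1)^(d+1) * ((d:ℝ) * TT))) * (t * t) := by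
      field_simp
    have hR' : (((d:ℝ) * 2^d * ((M:ℝ)+2)^M) * ((r:ℝ)+1)^M * t⁻¹ * TT) *
          ((((r:ℝ)+1)^d * ((r':ℝ)+1)^d) * t)
        = ((d:ℝ) * 2^d * ((M:ℝ)+2)^M) * ((r:ℝ)+1)^M * TT *
            (((r:ℝ)+1)^d * ((r':ℝ)+1)^d) := by
      field_simp
    rw [hL, hR', ht2, pow_succ]
    have hc0 : (0:ℝ) ≤ (2:ℝ)^d * (d:ℝ) * TT * (((r:ℝ)+1)^d * ((r':ℝ)+1)^d) :=
      mul_nonneg (mul_nonneg (mul_nonneg (by positivity) (Nat.cast_nonneg d)) hTT0)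
        (by positivity)
    have hint := mul_le_mul_of_nonneg_left hcoef hc0
    calc CB * (2^d * (((((r':ℝ)+1)^d * (((r':ℝ)+1))) * ((d:ℝ) * TT)))) * (((r:ℝ)+1)^d)
        = (2^d * (d:ℝ) * TT * (((r:ℝ)+1)^d * ((r':ℝ)+1)^d)) * (CB * (((r':ℝ)+1))) := by
          ring
      _ ≤ (2^d * (d:ℝ) * TT * (((r:ℝ)+1)^d * ((r':ℝ)+1)^d)) *
            (((M:ℝ)+2)^M * ((r:ℝ)+1)^M) := hint
      _ = ((d:ℝ) * 2^d * ((M:ℝ)+2)^M) * ((r:ℝ)+1)^M * TT *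
            (((r:ℝ)+1)^d * ((r':ℝ)+1)^d) := by ring
  -- final assembly
  calc |Pav M f x ℓ r - Pav M f x ℓ r'|
      ≤ (cr * cr')⁻¹ * ∑ y ∈ Qr, ∑ y' ∈ Qr', |Th y - Th y'| := hA2
    _ ≤ (cr * cr')⁻¹ * (CB * (F * (C * ((d:ℝ) * TT)))) := by
        apply mul_le_mul_of_nonneg_left _
          (inv_nonneg.mpr (le_of_lt (mul_pos hcr0 hcr0')))
        calc ∑ y ∈ Qr, ∑ y' ∈ Qr', |Th y - Th y'|
            ≤ ∑ y ∈ Qr, ∑ y' ∈ Qr', (CB * ∑ n : Fin d,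
                ∑ s ∈ Finset.Icc (a n) (a n + (r:ℤ)),
                ∑ γ ∈ Sg n, |fdMulti (updn n γ) f (pt n y y' s)|) :=
              Finset.sum_le_sum (fun y hy => Finset.sum_le_sum (fun y' hy' => hA3 y hy y' hy'))
          _ = CB * ∑ y ∈ Qr, ∑ y' ∈ Qr', ∑ n : Fin d,
                ∑ s ∈ Finset.Icc (a n) (a n + (r:ℤ)),
                ∑ γ ∈ Sg n, |fdMulti (updn n γ) f (pt n y y' s)| := by
              rw [Finset.mul_sum]
              exact Finset.sum_congr rfl (fun y _ => by rw [Finset.mul_sum])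
          _ = CB * ∑ n : Fin d, ∑ γ ∈ Sg n, ∑ y ∈ Qr, ∑ y' ∈ Qr',
                ∑ s ∈ Finset.Icc (a n) (a n + (r:ℤ)),
                |fdMulti (updn n γ) f (pt n y y' s)| := by rw [hswap]
          _ ≤ CB * (F * (C * ((d:ℝ) * TT))) := mul_le_mul_of_nonneg_left hRbound hCB0
    _ ≤ ((d : ℝ) * 2^d * ((M:ℝ)+2)^M) * ((r:ℝ)+1)^M * t⁻¹ * TT := hfinal

end StepBound
section TopScale

lemma sqrt_pow_eq (c : ℝ) (hc : 0 ≤ c) (j : ℕ) :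
    Real.sqrt (c^j) = (Real.sqrt c)^j := by
  induction j with
  | zero => simp
  | succ j ih => rw [pow_succ, pow_succ, Real.sqrt_mul (by positivity), ih]

lemma Gmono {M d : ℕ} (hMd : d ≤ 2*M) {s t : ℝ} (hs : 0 < s) (hst : s ≤ t) :
    s^M * (Real.sqrt (s^d))⁻¹ ≤ t^M * (Real.sqrt (t^d))⁻¹ := by
  have ht : 0 < t := lt_of_lt_of_le hs hst
  have hss : (0:ℝ) < Real.sqrt (s^d) := Real.sqrt_pos.mpr (by positivity)
  have hts : (0:ℝ) < Real.sqrt (t^d) := Real.sqrt_pos.mpr (by positivity)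
  have h := pow_sqrt_ratio hMd hs.le hst
  rw [← div_eq_mul_inv, ← div_eq_mul_inv, div_le_div_iff₀ hss hts]
  linarith [h]

lemma qbox_top {d ℓ : ℕ} {x : Fin d → ℤ} (hx : x ∈ bbox d ℓ) :
    qbox x ℓ ℓ = bbox d ℓ := by
  have hc : corner x ℓ ℓ = 0 := by
    funext i
    have := mem_bbox.mp hx i
    simp only [corner, Pi.zero_apply]
    omega
  rw [qbox, hc, bbox]
  congr 1
  funext i
  simp

lemma top_bound (d M ℓ : ℕ) (hM : 1 ≤ M) (hℓ : 1 ≤ ℓ)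
    (f : (Fin d → ℤ) → ℝ) (x : Fin d → ℤ) (hx : x ∈ bbox d ℓ) :
    |Pav M f x ℓ ℓ| ≤ ((M:ℝ)+1)^M * (Real.sqrt ((ℓ:ℝ)^d))⁻¹ *
      ∑ γ ∈ simplex d (M-1), ((ℓ:ℝ))^(∑ i, γ i) * Nn d ℓ f γ := by
  have hxa := mem_bbox.mp hx
  have hcard : (bbox d ℓ).card = (ℓ+1)^d := by
    rw [← qbox_top hx, qbox_card]
  have hb1 : |Pav M f x ℓ ℓ| ≤ (((ℓ+1)^d : ℕ) : ℝ)⁻¹ *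
      ∑ y ∈ bbox d ℓ, |Tay (M-1) f x y| := by
    rw [Pav, qbox_top hx, abs_mul, abs_of_nonneg (by positivity : (0:ℝ) ≤ (((ℓ+1)^d : ℕ):ℝ)⁻¹)]
    exact mul_le_mul_of_nonneg_left (Finset.abs_sum_le_sum_abs _ _) (by positivity)
  have hb2 : ∀ y ∈ bbox d ℓ, |Tay (M-1) f x y| ≤
      ∑ γ ∈ simplex d (M-1), ((M:ℝ)+1)^M * ((ℓ:ℝ))^(∑ i, γ i) * |fdMulti γ f y| := by
    intro y hy
    have hya := mem_bbox.mp hy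
    rw [Tay]
    calc |∑ γ ∈ simplex d (M-1), (∏ i, vc (x i - y i) (γ i)) * fdMulti γ f y|
        ≤ ∑ γ ∈ simplex d (M-1), |(∏ i, vc (x i - y i) (γ i)) * fdMulti γ f y| :=
          Finset.abs_sum_le_sum_abs _ _
      _ ≤ ∑ γ ∈ simplex d (M-1), ((M:ℝ)+1)^M * ((ℓ:ℝ))^(∑ i, γ i) * |fdMulti γ f y| := by
          apply Finset.sum_le_sum
          intro γ hγ
          rw [abs_mul]
          apply mul_le_mul_of_nonneg_right _ (abs_nonneg _)
          have hγm : ∑ i, γ i ≤ M - 1 := mem_simplex.mp hγ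
          calc |∏ i, vc (x i - y i) (γ i)|
              ≤ ∏ i, (((M:ℝ)+1) * (ℓ:ℝ))^(γ i) := by
                rw [Finset.abs_prod]
                apply Finset.prod_le_prod (fun i _ => abs_nonneg _)
                intro i _
                calc |vc (x i - y i) (γ i)|
                    ≤ (((x i - y i).natAbs : ℝ) + γ i)^(γ i) := vc_abs_le _ _
                  _ ≤ (((M:ℝ)+1) * (ℓ:ℝ))^(γ i) := by
                      apply pow_le_pow_left₀ (by positivity)
                      have h1 : (x i - y i).natAbs ≤ ℓ := by
                        have := hxa i; have := hya i; omega
                      have h2 : γ i ≤ M := by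
                        have := Finset.single_le_sum
                          (fun (i : Fin d) _ => Nat.zero_le (γ i)) (Finset.mem_univ i)
                        omega
                      have h3 : (((x i - y i).natAbs : ℝ)) ≤ (ℓ:ℝ) := by exact_mod_cast h1
                      have h4 : ((γ i : ℕ) : ℝ) ≤ (M:ℝ) := by exact_mod_cast h2
                      have h5 : (1:ℝ) ≤ (ℓ:ℝ) := by exact_mod_cast hℓ
                      nlinarith
            _ = (((M:ℝ)+1) * (ℓ:ℝ))^(∑ i, γ i) := Finset.prod_pow_eq_pow_sum _ _ _
            _ = ((M:ℝ)+1)^(∑ i, γ i) * ((ℓ:ℝ))^(∑ i, γ i) := mul_pow _ _ _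
            _ ≤ ((M:ℝ)+1)^M * ((ℓ:ℝ))^(∑ i, γ i) := by
                apply mul_le_mul_of_nonneg_right _ (by positivity)
                apply pow_le_pow_right₀ (by linarith [Nat.cast_nonneg (α := ℝ) M])
                omega
  calc |Pav M f x ℓ ℓ|
      ≤ (((ℓ+1)^d : ℕ) : ℝ)⁻¹ * ∑ y ∈ bbox d ℓ, |Tay (M-1) f x y| := hb1
    _ ≤ (((ℓ+1)^d : ℕ) : ℝ)⁻¹ * ∑ y ∈ bbox d ℓ,
          ∑ γ ∈ simplex d (M-1), ((M:ℝ)+1)^M * ((ℓ:ℝ))^(∑ i, γ i) * |fdMulti γ f y| := by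
        apply mul_le_mul_of_nonneg_left _ (by positivity)
        exact Finset.sum_le_sum hb2
    _ = (((ℓ+1)^d : ℕ) : ℝ)⁻¹ * ∑ γ ∈ simplex d (M-1),
          ((M:ℝ)+1)^M * ((ℓ:ℝ))^(∑ i, γ i) * ∑ y ∈ bbox d ℓ, |fdMulti γ f y| := by
        rw [Finset.sum_comm]
        congr 1
        apply Finset.sum_congr rfl
        intro γ _
        rw [Finset.mul_sum]
    _ ≤ (((ℓ+1)^d : ℕ) : ℝ)⁻¹ * ∑ γ ∈ simplex d (M-1),
          ((M:ℝ)+1)^M * ((ℓ:ℝ))^(∑ i, γ i) *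
            (Real.sqrt (((ℓ+1)^d : ℕ)) * Nn d ℓ f γ) := by
        apply mul_le_mul_of_nonneg_left _ (by positivity)
        apply Finset.sum_le_sum
        intro γ _
        apply mul_le_mul_of_nonneg_left _ (by positivity)
        calc ∑ y ∈ bbox d ℓ, |fdMulti γ f y|
            ≤ Real.sqrt (bbox d ℓ).card * Real.sqrt (∑ y ∈ bbox d ℓ, (fdMulti γ f y)^2) :=
              sum_abs_le_sqrt_card _ _
          _ = Real.sqrt (((ℓ+1)^d : ℕ)) * Nn d ℓ f γ := by rw [hcard, Nn]
    _ ≤ ((M:ℝ)+1)^M * (Real.sqrt ((ℓ:ℝ)^d))⁻¹ *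
          ∑ γ ∈ simplex d (M-1), ((ℓ:ℝ))^(∑ i, γ i) * Nn d ℓ f γ := by
        have hc : (((ℓ+1)^d : ℕ) : ℝ)⁻¹ * Real.sqrt (((ℓ+1)^d : ℕ))
            = (Real.sqrt (((ℓ+1)^d : ℕ)))⁻¹ := by
          have h0 : (0:ℝ) < (((ℓ+1)^d : ℕ) : ℝ) := by positivity
          have hs : Real.sqrt (((ℓ+1)^d : ℕ)) * Real.sqrt (((ℓ+1)^d : ℕ))
              = (((ℓ+1)^d : ℕ) : ℝ) := Real.mul_self_sqrt h0.le
          have hs0 : (0:ℝ) < Real.sqrt (((ℓ+1)^d : ℕ)) := Real.sqrt_pos.mpr h0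
          field_simp
          exact Real.sq_sqrt h0.le
        have hmono : (Real.sqrt (((ℓ+1)^d : ℕ)))⁻¹ ≤ (Real.sqrt ((ℓ:ℝ)^d))⁻¹ := by
          apply inv_anti₀
          · apply Real.sqrt_pos.mpr
            have h5 : (1:ℝ) ≤ (ℓ:ℝ) := by exact_mod_cast hℓ
            positivity
          · apply Real.sqrt_le_sqrt
            have : ((ℓ:ℝ))^d ≤ ((ℓ:ℝ)+1)^d := by
              apply pow_le_pow_left₀ (by positivity)
              linarith
            calc ((ℓ:ℝ))^d ≤ ((ℓ:ℝ)+1)^d := this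
              _ = (((ℓ+1)^d : ℕ) : ℝ) := by push_cast; ring
        calc (((ℓ+1)^d : ℕ) : ℝ)⁻¹ * ∑ γ ∈ simplex d (M-1),
              ((M:ℝ)+1)^M * ((ℓ:ℝ))^(∑ i, γ i) * (Real.sqrt (((ℓ+1)^d : ℕ)) * Nn d ℓ f γ)
            = ((M:ℝ)+1)^M * ((((ℓ+1)^d : ℕ) : ℝ)⁻¹ * Real.sqrt (((ℓ+1)^d : ℕ))) *
                ∑ γ ∈ simplex d (M-1), ((ℓ:ℝ))^(∑ i, γ i) * Nn d ℓ f γ := by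
              rw [Finset.mul_sum, Finset.mul_sum]
              apply Finset.sum_congr rfl
              intro γ _
              ring
          _ = ((M:ℝ)+1)^M * (Real.sqrt (((ℓ+1)^d : ℕ)))⁻¹ *
                ∑ γ ∈ simplex d (M-1), ((ℓ:ℝ))^(∑ i, γ i) * Nn d ℓ f γ := by rw [hc]
          _ ≤ ((M:ℝ)+1)^M * (Real.sqrt ((ℓ:ℝ)^d))⁻¹ *
                ∑ γ ∈ simplex d (M-1), ((ℓ:ℝ))^(∑ i, γ i) * Nn d ℓ f γ := by
              apply mul_le_mul_of_nonneg_right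
              · exact mul_le_mul_of_nonneg_left hmono (by positivity)
              · apply Finset.sum_nonneg
                intro γ _
                exact mul_nonneg (by positivity) (Real.sqrt_nonneg _)

end TopScale
section Key

set_option maxHeartbeats 1000000 in
theorem key_bound (d M ℓ : ℕ) (hd : 1 ≤ d) (hM : 1 ≤ M) (hMd : d + 1 ≤ 2*M) (hℓ : 1 ≤ ℓ)
    (f : (Fin d → ℤ) → ℝ) (x : Fin d → ℤ) (hx : x ∈ bbox d ℓ) :
    |f x| ≤ (((M:ℝ)+1)^M + 4 * ((d:ℝ) * 2^d * ((M:ℝ)+2)^M) * 2^M) *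
      (Real.sqrt ((ℓ:ℝ)^d))⁻¹ * ∑ γ ∈ simplex d M, ((ℓ:ℝ))^(∑ i, γ i) * Nn d ℓ f γ := by
  classical
  have hℓR : (1:ℝ) ≤ (ℓ:ℝ) := by exact_mod_cast hℓ
  set Ξ := ∑ γ ∈ simplex d M, ((ℓ:ℝ))^(∑ i, γ i) * Nn d ℓ f γ with hΞ
  set T := ∑ γ ∈ (simplex d M).filter (fun γ => ∑ i, γ i = M), Nn d ℓ f γ with hT
  set Cs : ℝ := (d:ℝ) * 2^d * ((M:ℝ)+2)^M with hCs
  set q : ℝ := (2:ℝ)^M * (Real.sqrt ((2:ℝ)^d))⁻¹ with hq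
  have hΞ0 : 0 ≤ Ξ := Finset.sum_nonneg (fun γ _ =>
    mul_nonneg (by positivity) (Real.sqrt_nonneg _))
  have hT0 : 0 ≤ T := Finset.sum_nonneg (fun γ _ => Real.sqrt_nonneg _)
  have hCs0 : 0 ≤ Cs := by positivity
  have hsq2 : (0:ℝ) < Real.sqrt ((2:ℝ)^d) := Real.sqrt_pos.mpr (by positivity)
  have hq0 : 0 < q := by
    rw [hq]; positivity
  have hq2 : (2:ℝ) ≤ q * q := by
    have h1 : q * q = (2:ℝ)^(2*M) / (2:ℝ)^d := by
      have h2 : Real.sqrt ((2:ℝ)^d) * Real.sqrt ((2:ℝ)^d) = (2:ℝ)^d :=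
        Real.mul_self_sqrt (by positivity)
      have h2' : Real.sqrt ((2:ℝ)^d) ≠ 0 := by positivity
      rw [hq, eq_div_iff (by positivity : ((2:ℝ)^d) ≠ 0)]
      have e : (2:ℝ)^M * (Real.sqrt ((2:ℝ)^d))⁻¹ * ((2:ℝ)^M * (Real.sqrt ((2:ℝ)^d))⁻¹)
            * (2:ℝ)^d
          = (2:ℝ)^M * (2:ℝ)^M *
              ((2:ℝ)^d / (Real.sqrt ((2:ℝ)^d) * Real.sqrt ((2:ℝ)^d))) := by
        field_simp
        try ring
      rw [e, h2, div_self (by positivity : ((2:ℝ)^d) ≠ 0), mul_one, ← pow_add, two_mul]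
    rw [h1, le_div_iff₀ (by positivity)]
    have h2 : (2:ℝ)^(d+1) ≤ (2:ℝ)^(2*M) := by
      apply pow_le_pow_right₀ (by norm_num)
      omega
    calc (2:ℝ) * 2^d = 2^(d+1) := by rw [pow_succ]; ring
      _ ≤ (2:ℝ)^(2*M) := h2
  have hq14 : (1.4:ℝ) ≤ q := by nlinarith
  have hqne1 : q ≠ 1 := by intro h; rw [h] at hq14; norm_num at hq14
  -- radii
  set ρ : ℕ → ℕ := fun j => min (2^j - 1) ℓ with hρ
  have hρ0 : ρ 0 = 0 := by simp [hρ]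
  have hρle : ∀ j, ρ j ≤ ℓ := fun j => min_le_right _ _
  have hρmono : ∀ j, ρ j ≤ ρ (j+1) := by
    intro j
    have h1 : (1:ℕ) ≤ 2^j := Nat.one_le_two_pow
    have h2 : 2^(j+1) = 2*2^j := by rw [pow_succ]; ring
    simp only [hρ]
    omega
  have hρℓ : ρ ℓ = ℓ := by
    have := Nat.lt_two_pow_self (n := ℓ)
    simp only [hρ]
    omega
  have htel : f x - Pav M f x ℓ ℓ
      = ∑ j ∈ Finset.range ℓ, (Pav M f x ℓ (ρ j) - Pav M f x ℓ (ρ (j+1))) := by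
    rw [Finset.sum_range_sub' (fun j => Pav M f x ℓ (ρ j))]
    rw [hρ0, hρℓ, Pav_zero f hx]
  -- per-step bound
  have hstep : ∀ j, |Pav M f x ℓ (ρ j) - Pav M f x ℓ (ρ (j+1))|
      ≤ (if 2^j ≤ ℓ then Cs * 2^M * q^j * T else 0) := by
    intro j
    by_cases hρeq : ρ j = ρ (j+1)
    · rw [hρeq, sub_self, abs_zero]
      split_ifs
      · positivity
      · exact le_refl 0
    · have h2j : 2^j ≤ ℓ := by
        have h1 : (1:ℕ) ≤ 2^j := Nat.one_le_two_pow
        have h2 : 2^(j+1) = 2*2^j := by rw [pow_succ]; ring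
        simp only [hρ] at hρeq
        omega
      rw [if_pos h2j, abs_sub_comm]
      have hb := step_bound d M ℓ hd hM f x hx (ρ (j+1)) (ρ j) (hρmono j)
        (hρle (j+1)) (by
          have h1 : (1:ℕ) ≤ 2^j := Nat.one_le_two_pow
          have h2 : 2^(j+1) = 2*2^j := by rw [pow_succ]; ring
          simp only [hρ]
          omega)
      apply le_trans hb
      rw [← hT]
      have hGj : ((ρ (j+1) : ℝ)+1)^M * (Real.sqrt (((ρ (j+1) : ℝ)+1)^d))⁻¹
          ≤ 2^M * q^j := by
        have hle1 : ((ρ (j+1) : ℝ)+1) ≤ ((2:ℝ)^(j+1)) := by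
          have h1 : ρ (j+1) + 1 ≤ 2^(j+1) := by
            have h1' : (1:ℕ) ≤ 2^(j+1) := Nat.one_le_two_pow
            simp only [hρ]
            omega
          calc ((ρ (j+1) : ℝ)+1) = ((ρ (j+1) + 1 : ℕ) : ℝ) := by push_cast; ring
            _ ≤ ((2^(j+1) : ℕ) : ℝ) := by exact_mod_cast h1
            _ = (2:ℝ)^(j+1) := by push_cast; ring
        have hmono := Gmono (M := M) (d := d) (by omega) (by positivity :
          (0:ℝ) < ((ρ (j+1) : ℝ)+1)) hle1
        apply le_trans hmono
        -- G(2^(j+1)) ≤ 2^M * q^j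
        have e1 : ((2:ℝ)^(j+1))^M = 2^M * ((2:ℝ)^M)^j := by
          rw [← pow_mul, ← pow_mul, ← pow_add]
          congr 1
          ring
        have e2 : (Real.sqrt (((2:ℝ)^(j+1))^d))⁻¹ ≤ (Real.sqrt (((2:ℝ)^j)^d))⁻¹ := by
          apply inv_anti₀
          · apply Real.sqrt_pos.mpr; positivity
          · apply Real.sqrt_le_sqrt
            apply pow_le_pow_left₀ (by positivity)
            apply pow_le_pow_right₀ (by norm_num)
            omega
        have e3 : (Real.sqrt (((2:ℝ)^j)^d))⁻¹ = ((Real.sqrt ((2:ℝ)^d))⁻¹)^j := by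
          rw [show ((2:ℝ)^j)^d = ((2:ℝ)^d)^j from by rw [← pow_mul, ← pow_mul, mul_comm]]
          rw [sqrt_pow_eq _ (by positivity), inv_pow]
        calc ((2:ℝ)^(j+1))^M * (Real.sqrt (((2:ℝ)^(j+1))^d))⁻¹
            ≤ ((2:ℝ)^(j+1))^M * (Real.sqrt (((2:ℝ)^j)^d))⁻¹ := by
              apply mul_le_mul_of_nonneg_left e2 (by positivity)
          _ = 2^M * (((2:ℝ)^M)^j * ((Real.sqrt ((2:ℝ)^d))⁻¹)^j) := by
              rw [e1, e3]; ring
          _ = 2^M * q^j := by rw [hq, mul_pow]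
      calc Cs * ((ρ (j+1) : ℝ)+1)^M * (Real.sqrt (((ρ (j+1) : ℝ)+1)^d))⁻¹ * T
          = Cs * (((ρ (j+1) : ℝ)+1)^M * (Real.sqrt (((ρ (j+1) : ℝ)+1)^d))⁻¹) * T := by
            ring
        _ ≤ Cs * (2^M * q^j) * T := by
            apply mul_le_mul_of_nonneg_right _ hT0
            exact mul_le_mul_of_nonneg_left hGj hCs0
        _ = Cs * 2^M * q^j * T := by ring
  -- sum of steps
  have hgeom : ∑ j ∈ Finset.range ℓ, (if 2^j ≤ ℓ then Cs * 2^M * q^j * T else 0)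
      ≤ Cs * 2^M * T * (4 * ((ℓ:ℝ)^M * (Real.sqrt ((ℓ:ℝ)^d))⁻¹)) := by
    set K := Nat.log 2 ℓ with hK
    have hsub : ∑ j ∈ Finset.range ℓ, (if 2^j ≤ ℓ then Cs * 2^M * q^j * T else 0)
        ≤ Cs * 2^M * T * ∑ j ∈ Finset.range (K+1), q^j := by
      calc ∑ j ∈ Finset.range ℓ, (if 2^j ≤ ℓ then Cs * 2^M * q^j * T else 0)
          = ∑ j ∈ (Finset.range ℓ).filter (fun j => 2^j ≤ ℓ), Cs * 2^M * q^j * T :=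
            (Finset.sum_filter _ _).symm
        _ ≤ ∑ j ∈ Finset.range (K+1), Cs * 2^M * q^j * T := by
            apply Finset.sum_le_sum_of_subset_of_nonneg
            · intro j hj
              rw [Finset.mem_filter] at hj
              rw [Finset.mem_range]
              have : j ≤ K := by
                rw [hK]
                exact (Nat.le_log_iff_pow_le (by norm_num) (by omega)).mpr hj.2
              omega
            · intro j _ _
              exact mul_nonneg (mul_nonneg (mul_nonneg hCs0 (by positivity))
                (pow_nonneg hq0.le j)) hT0
        _ = Cs * 2^M * T * ∑ j ∈ Finset.range (K+1), q^j := by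
            rw [Finset.mul_sum]
            apply Finset.sum_congr rfl
            intro j _
            ring
    apply le_trans hsub
    apply mul_le_mul_of_nonneg_left _
      (mul_nonneg (mul_nonneg hCs0 (by positivity)) hT0)
    -- geometric sum bound
    have hgs : ∑ j ∈ Finset.range (K+1), q^j = (q^(K+1) - 1)/(q - 1) := geom_sum_eq hqne1 _
    have hq1 : (0:ℝ) < q - 1 := by linarith
    have hqK : q^K ≤ (ℓ:ℝ)^M * (Real.sqrt ((ℓ:ℝ)^d))⁻¹ := by
      have e3 : ((2:ℝ)^K)^M * (Real.sqrt (((2:ℝ)^K)^d))⁻¹ = q^K := by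
        rw [show ((2:ℝ)^K)^M = ((2:ℝ)^M)^K from by rw [← pow_mul, ← pow_mul, mul_comm]]
        rw [show (((2:ℝ)^K)^d) = ((2:ℝ)^d)^K from by rw [← pow_mul, ← pow_mul, mul_comm]]
        rw [sqrt_pow_eq _ (by positivity), ← inv_pow, ← mul_pow, hq]
      rw [← e3]
      apply Gmono (by omega) (by positivity)
      have h2K : (2:ℕ)^K ≤ ℓ := Nat.pow_log_le_self 2 (by omega)
      calc ((2:ℝ)^K) = (((2:ℕ)^K : ℕ) : ℝ) := by push_cast; ring
        _ ≤ (ℓ:ℝ) := by exact_mod_cast h2K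
    calc ∑ j ∈ Finset.range (K+1), q^j = (q^(K+1) - 1)/(q - 1) := hgs
      _ ≤ q^(K+1)/(q-1) := by
          apply (div_le_div_iff_of_pos_right hq1).mpr
          linarith [pow_nonneg hq0.le (K+1)]
      _ ≤ 4 * q^K := by
          rw [div_le_iff₀ hq1, pow_succ]
          nlinarith [pow_nonneg hq0.le K]
      _ ≤ 4 * ((ℓ:ℝ)^M * (Real.sqrt ((ℓ:ℝ)^d))⁻¹) := by
          apply mul_le_mul_of_nonneg_left hqK (by norm_num)
  -- combine
  have hTΞ : ((ℓ:ℝ))^M * T ≤ Ξ := by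
    rw [hT, hΞ, Finset.mul_sum]
    calc ∑ γ ∈ (simplex d M).filter (fun γ => ∑ i, γ i = M), ((ℓ:ℝ))^M * Nn d ℓ f γ
        = ∑ γ ∈ (simplex d M).filter (fun γ => ∑ i, γ i = M),
            ((ℓ:ℝ))^(∑ i, γ i) * Nn d ℓ f γ := by
          apply Finset.sum_congr rfl
          intro γ hγ
          rw [Finset.mem_filter] at hγ
          rw [hγ.2]
      _ ≤ ∑ γ ∈ simplex d M, ((ℓ:ℝ))^(∑ i, γ i) * Nn d ℓ f γ := by
          apply Finset.sum_le_sum_of_subset_of_nonneg (Finset.filter_subset _ _)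
          intro γ _ _
          exact mul_nonneg (by positivity) (Real.sqrt_nonneg _)
  have hΞ' : ∑ γ ∈ simplex d (M-1), ((ℓ:ℝ))^(∑ i, γ i) * Nn d ℓ f γ ≤ Ξ := by
    rw [hΞ]
    apply Finset.sum_le_sum_of_subset_of_nonneg
    · intro γ hγ
      have := mem_simplex.mp hγ
      exact mem_simplex.mpr (by omega)
    · intro γ _ _
      exact mul_nonneg (by positivity) (Real.sqrt_nonneg _)
  have htop := top_bound d M ℓ hM hℓ f x hx
  have hsqℓ : (0:ℝ) < Real.sqrt ((ℓ:ℝ)^d) := Real.sqrt_pos.mpr (by positivity)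
  calc |f x| = |Pav M f x ℓ ℓ + (f x - Pav M f x ℓ ℓ)| := by ring_nf
    _ ≤ |Pav M f x ℓ ℓ| + |f x - Pav M f x ℓ ℓ| := abs_add_le _ _
    _ ≤ ((M:ℝ)+1)^M * (Real.sqrt ((ℓ:ℝ)^d))⁻¹ *
          (∑ γ ∈ simplex d (M-1), ((ℓ:ℝ))^(∑ i, γ i) * Nn d ℓ f γ)
        + Cs * 2^M * T * (4 * ((ℓ:ℝ)^M * (Real.sqrt ((ℓ:ℝ)^d))⁻¹)) := by
        apply add_le_add htop
        rw [htel]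
        calc |∑ j ∈ Finset.range ℓ, (Pav M f x ℓ (ρ j) - Pav M f x ℓ (ρ (j+1)))|
            ≤ ∑ j ∈ Finset.range ℓ, |Pav M f x ℓ (ρ j) - Pav M f x ℓ (ρ (j+1))| :=
              Finset.abs_sum_le_sum_abs _ _
          _ ≤ ∑ j ∈ Finset.range ℓ, (if 2^j ≤ ℓ then Cs * 2^M * q^j * T else 0) :=
              Finset.sum_le_sum (fun j _ => hstep j)
          _ ≤ Cs * 2^M * T * (4 * ((ℓ:ℝ)^M * (Real.sqrt ((ℓ:ℝ)^d))⁻¹)) := hgeom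
    _ ≤ ((M:ℝ)+1)^M * (Real.sqrt ((ℓ:ℝ)^d))⁻¹ * Ξ
        + 4 * Cs * 2^M * ((Real.sqrt ((ℓ:ℝ)^d))⁻¹ * Ξ) := by
        apply add_le_add
        · exact mul_le_mul_of_nonneg_left hΞ' (by positivity)
        · calc Cs * 2^M * T * (4 * ((ℓ:ℝ)^M * (Real.sqrt ((ℓ:ℝ)^d))⁻¹))
              = 4 * Cs * 2^M * ((Real.sqrt ((ℓ:ℝ)^d))⁻¹ * ((ℓ:ℝ)^M * T)) := by ring
            _ ≤ 4 * Cs * 2^M * ((Real.sqrt ((ℓ:ℝ)^d))⁻¹ * Ξ) := by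
                apply mul_le_mul_of_nonneg_left _ (by positivity)
                exact mul_le_mul_of_nonneg_left hTΞ (by positivity)
    _ = (((M:ℝ)+1)^M + 4 * Cs * 2^M) * (Real.sqrt ((ℓ:ℝ)^d))⁻¹ * Ξ := by ring
end Key
/-- Discrete Sobolev inequality: there is `S(d) > 0` such that for every `ℓ ≥ 1` and
`f : ℤ^d → ℝ`, with `B_ℓ = {0,…,ℓ}^d` and `M' = ⌊d/2⌋ + 1`,
`max_{x ∈ B_ℓ} |f(x)| ≤ S(d) ℓ^{−d/2} ∑_{|α| ≤ M'} (∑_{x ∈ B_ℓ} ℓ^{2|α|} |∇^α f(x)|²)^{1/2}`. -/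
theorem stmt14 (d : ℕ) (hd : 1 ≤ d) :
    ∃ S : ℝ, 0 < S ∧ ∀ ℓ : ℕ, 1 ≤ ℓ → ∀ f : (Fin d → ℤ) → ℝ,
      ∀ x ∈ Finset.Icc (0 : Fin d → ℤ) (fun _ => (ℓ : ℤ)),
        |f x| ≤ S * (ℓ : ℝ) ^ (-(d : ℝ) / 2) *
          ∑ α ∈ (Finset.Iic (fun _ : Fin d => d / 2 + 1)).filter
              (fun α => ∑ i, α i ≤ d / 2 + 1),
            Real.sqrt (∑ y ∈ Finset.Icc (0 : Fin d → ℤ) (fun _ => (ℓ : ℤ)),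
              (ℓ : ℝ) ^ (2 * ∑ i, α i) * (fdMulti α f y) ^ 2) := by
  set M := d/2 + 1 with hM
  refine ⟨((M:ℝ)+1)^M + 4*((d:ℝ)*2^d*((M:ℝ)+2)^M)*2^M, by positivity, ?_⟩
  intro ℓ hℓ f x hx
  have hℓ0 : (0:ℝ) < (ℓ:ℝ) := by
    have : (1:ℝ) ≤ (ℓ:ℝ) := by exact_mod_cast hℓ
    linarith
  have hkey := key_bound d M ℓ hd (by omega) (by omega) hℓ f x hx
  have hrpow : (ℓ:ℝ)^(-(d:ℝ)/2) = (Real.sqrt ((ℓ:ℝ)^d))⁻¹ := by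
    rw [Real.sqrt_eq_rpow, ← Real.rpow_natCast (ℓ:ℝ) d, ← Real.rpow_mul hℓ0.le,
      ← Real.rpow_neg hℓ0.le]
    congr 1
    ring
  have hterm : ∀ α : Fin d → ℕ,
      Real.sqrt (∑ y ∈ Finset.Icc (0 : Fin d → ℤ) (fun _ => (ℓ:ℤ)),
        (ℓ:ℝ)^(2*∑ i, α i) * (fdMulti α f y)^2)
      = ((ℓ:ℝ))^(∑ i, α i) * Nn d ℓ f α := by
    intro α
    rw [← Finset.mul_sum, Real.sqrt_mul (by positivity)]
    congr 1
    rw [show 2*(∑ i, α i) = (∑ i, α i)*2 from mul_comm _ _, pow_mul]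
    exact Real.sqrt_sq (by positivity)
  have hsum : ∑ α ∈ (Finset.Iic (fun _ : Fin d => M)).filter
        (fun α => ∑ i, α i ≤ M),
      Real.sqrt (∑ y ∈ Finset.Icc (0 : Fin d → ℤ) (fun _ => (ℓ:ℤ)),
        (ℓ:ℝ)^(2*∑ i, α i) * (fdMulti α f y)^2)
      = ∑ γ ∈ simplex d M, ((ℓ:ℝ))^(∑ i, γ i) * Nn d ℓ f γ :=
    Finset.sum_congr rfl (fun α _ => hterm α)
  rw [hrpow, hsum]
  exact hkey
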